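/- arXiv:1710.05250 — 2 statements merged into one kernel-verified Lean document; each statement's English description precedes it below -/
import Mathlib

section
/- For every natural number n ≥ 1, the clique number of the commuting graph of the null union Sₙ • S₁ equals 2n, and Sₙ • S₁ is generated by 4 elements. -/
/-- The commuting graph of a semigroup: vertices are the non-central
elements, two distinct vertices are adjacent iff they commute. -/
def CommutingGraph (S : Type*) [Semigroup S] :
    SimpleGraph {x : S // x ∉ Set.center S} where
  Adj a b := a ≠ b ∧ (a : S) * b = (b : S) * a
  symm := ⟨fun _ _ ⟨h, hc⟩ => ⟨h.symm, hc.symm⟩⟩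
  loopless := ⟨fun _ ⟨h, _⟩ => h rfl⟩

/-- The free semigroup with zero on the two generators `a = of false`, `b = of true`. -/
abbrev W2 := WithZero (FreeSemigroup Bool)

/-- The generator `a`. -/
def ga : FreeSemigroup Bool := FreeSemigroup.of false

/-- The generator `b`. -/
def gb : FreeSemigroup Bool := FreeSemigroup.of true

/-- `fsPow x k = x^(k+1)` (positive powers in a semigroup). -/
def fsPow (x : FreeSemigroup Bool) : ℕ → FreeSemigroup Bool
  | 0 => x
  | k + 1 => fsPow x k * x

/-- `apow i` is `a^i` for `i ≥ 1` (junk value `a` at `i = 0`). -/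
def apow (i : ℕ) : FreeSemigroup Bool := fsPow ga (i - 1)

/-- The defining relations of `Sₙ`: `a^(n+1) = b² = 0`, `aba = 0`, `b aⁱ b = 0` for `i ≥ 1`. -/
def SnRel (n : ℕ) : W2 → W2 → Prop := fun p q =>
  (p = ((apow (n + 1) : FreeSemigroup Bool) : W2) ∧ q = 0) ∨
  (p = ((gb * gb : FreeSemigroup Bool) : W2) ∧ q = 0) ∨
  (p = ((ga * gb * ga : FreeSemigroup Bool) : W2) ∧ q = 0) ∨
  (∃ i : ℕ, 1 ≤ i ∧ p = ((gb * apow i * gb : FreeSemigroup Bool) : W2) ∧ q = 0)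

/-- The congruence generated by the relations of `Sₙ`. -/
def SnCon (n : ℕ) : Con W2 := conGen (SnRel n)

/-- The semigroup `Sₙ = ⟨a, b | a^(n+1) = b² = 0, aba = baⁱb = 0 ∀ i ≥ 1⟩`. -/
def Sn (n : ℕ) : Type := (SnCon n).Quotient

instance (n : ℕ) : Semigroup (Sn n) := Con.semigroup _

/-- The canonical projection onto `Sₙ`. -/
def smk (n : ℕ) : W2 → Sn n := (SnCon n).toQuotient
/-- The free semigroup with zero on the two generators `a = of false`, `b = of true`. -/
abbrev W2' := WithZero (FreeSemigroup Bool)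

/-- The generator `a` of `S₁`. -/
def ga1 : FreeSemigroup Bool := FreeSemigroup.of false

/-- The generator `b` of `S₁`. -/
def gb1 : FreeSemigroup Bool := FreeSemigroup.of true

/-- The defining relations of `S₁`: `a² = b² = 0`, `aba = bab = 0`. -/
def S1Rel : W2' → W2' → Prop := fun p q =>
  (p = ((ga1 * ga1 : FreeSemigroup Bool) : W2') ∧ q = 0) ∨
  (p = ((gb1 * gb1 : FreeSemigroup Bool) : W2') ∧ q = 0) ∨
  (p = ((ga1 * gb1 * ga1 : FreeSemigroup Bool) : W2') ∧ q = 0) ∨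
  (p = ((gb1 * ga1 * gb1 : FreeSemigroup Bool) : W2') ∧ q = 0)

/-- The congruence generated by the relations of `S₁`. -/
def S1Con : Con W2' := conGen S1Rel

/-- The semigroup `S₁ = ⟨a, b | a² = b² = 0, aba = bab = 0⟩`. -/
def S1 : Type := S1Con.Quotient

instance : Semigroup S1 := Con.semigroup _

/-- The canonical projection onto `S₁`. -/
def s1mk : W2' → S1 := S1Con.toQuotient
/-- The null union `S • T` of two semigroups with zero: the zeros are
identified and all cross products are `0`.  It is realized as the
subsemigroup `{(s, t) | s = 0 ∨ t = 0}` of `S × T`, where a nonzero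
`s ∈ S` corresponds to `(s, 0)`, a nonzero `t ∈ T` to `(0, t)`, and the
common zero to `(0, 0)`. -/
def NullUnion (S T : Type*) [MulZeroClass S] [MulZeroClass T] : Type _ :=
  {p : S × T // p.1 = 0 ∨ p.2 = 0}

instance (S T : Type*) [MulZeroClass S] [MulZeroClass T] : Mul (NullUnion S T) :=
  ⟨fun x y => ⟨(x.1.1 * y.1.1, x.1.2 * y.1.2), by
    rcases x.2 with h | h
    · exact Or.inl (by rw [h, zero_mul])
    · exact Or.inr (by rw [h, zero_mul])⟩⟩

instance (S T : Type*) [MulZeroClass S] [MulZeroClass T] : Zero (NullUnion S T) :=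
  ⟨⟨(0, 0), Or.inl rfl⟩⟩

instance (S T : Type*) [SemigroupWithZero S] [SemigroupWithZero T] :
    Semigroup (NullUnion S T) where
  mul_assoc a b c := Subtype.ext (Prod.ext (mul_assoc _ _ _) (mul_assoc _ _ _))

instance (n : ℕ) : SemigroupWithZero (Sn n) :=
  { (inferInstance : Semigroup (Sn n)) with
    zero := smk n 0
    zero_mul := fun x => Con.induction_on x fun a => by
      show ((0 : W2) : (SnCon n).Quotient) * (a : (SnCon n).Quotient) =
        ((0 : W2) : (SnCon n).Quotient)
      rw [← Con.coe_mul, zero_mul]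
    mul_zero := fun x => Con.induction_on x fun a => by
      show (a : (SnCon n).Quotient) * ((0 : W2) : (SnCon n).Quotient) =
        ((0 : W2) : (SnCon n).Quotient)
      rw [← Con.coe_mul, mul_zero] }

instance : SemigroupWithZero S1 :=
  { (inferInstance : Semigroup S1) with
    zero := s1mk 0
    zero_mul := fun x => Con.induction_on x fun a => by
      show ((0 : W2') : S1Con.Quotient) * (a : S1Con.Quotient) =
        ((0 : W2') : S1Con.Quotient)
      rw [← Con.coe_mul, zero_mul]
    mul_zero := fun x => Con.induction_on x fun a => by
      show (a : S1Con.Quotient) * ((0 : W2') : S1Con.Quotient) =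
        ((0 : W2') : S1Con.Quotient)
      rw [← Con.coe_mul, mul_zero] }

/-! ### Auxiliary development -/

section Words

lemma apow_one : apow 1 = ga := rfl

lemma apow_succ (i : ℕ) (h : 1 ≤ i) : apow (i + 1) = apow i * ga := by
  unfold apow
  have h1 : i + 1 - 1 = (i - 1) + 1 := by omega
  rw [h1]; rfl

lemma ga_fsPow (k : ℕ) : ga * fsPow ga k = fsPow ga k * ga := by
  induction k with
  | zero => rfl
  | succ k ih =>
    show ga * (fsPow ga k * ga) = _
    rw [← mul_assoc, ih]; rfl

lemma apow_succ' (i : ℕ) (h : 1 ≤ i) : apow (i + 1) = ga * apow i := by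
  rw [apow_succ i h, apow, ga_fsPow]

lemma apow_add (i j : ℕ) (hi : 1 ≤ i) (hj : 1 ≤ j) :
    apow (i + j) = apow i * apow j := by
  induction j with
  | zero => omega
  | succ j ih =>
    rcases Nat.lt_or_ge j 1 with h1 | h1
    · have : j = 0 := by omega
      subst this
      rw [apow_succ i hi]; rfl
    · rw [← add_assoc, apow_succ (i + j) (by omega), ih h1, apow_succ j h1, mul_assoc]

/-- The normal-form word `a^i b` (with `i = 0` giving `b`). -/
def nbw (i : ℕ) : FreeSemigroup Bool := if i = 0 then gb else apow i * gb

/-- The normal-form word `b a^j` (for `j ≥ 1`). -/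
def ncw (j : ℕ) : FreeSemigroup Bool := gb * apow j

end Words

section TagModel

/-- Tags for the normal forms of `Sₙ` (plus a formal identity `one`). -/
inductive Tg : Type
  | one | zero | A (i : ℕ) | AB (i : ℕ) | BA (i : ℕ)
  deriving DecidableEq

/-- Left multiplication by `a` on tags. -/
def lA (n : ℕ) : Tg → Tg
  | .one => if 1 ≤ n then .A 1 else .zero
  | .zero => .zero
  | .A i => if i + 1 ≤ n then .A (i + 1) else .zero
  | .AB i => if i + 1 ≤ n then .AB (i + 1) else .zero
  | .BA _ => .zero

/-- Left multiplication by `b` on tags. -/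
def lB (n : ℕ) : Tg → Tg
  | .one => .AB 0
  | .zero => .zero
  | .A i => if i ≤ n then .BA i else .zero
  | .AB _ => .zero
  | .BA _ => .zero

@[simp] lemma lA_one (n : ℕ) : lA n .one = if 1 ≤ n then .A 1 else .zero := rfl
@[simp] lemma lA_zero (n : ℕ) : lA n .zero = .zero := rfl
@[simp] lemma lA_A (n i : ℕ) : lA n (.A i) = if i + 1 ≤ n then .A (i + 1) else .zero := rfl
@[simp] lemma lA_AB (n i : ℕ) : lA n (.AB i) = if i + 1 ≤ n then .AB (i + 1) else .zero := rfl
@[simp] lemma lA_BA (n i : ℕ) : lA n (.BA i) = .zero := rfl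
@[simp] lemma lB_one (n : ℕ) : lB n .one = .AB 0 := rfl
@[simp] lemma lB_zero (n : ℕ) : lB n .zero = .zero := rfl
@[simp] lemma lB_A (n i : ℕ) : lB n (.A i) = if i ≤ n then .BA i else .zero := rfl
@[simp] lemma lB_AB (n i : ℕ) : lB n (.AB i) = .zero := rfl
@[simp] lemma lB_BA (n i : ℕ) : lB n (.BA i) = .zero := rfl

/-- The representation of the free semigroup on tags. -/
def θmap (n : ℕ) : FreeSemigroup Bool →ₙ* Function.End Tg :=
  FreeSemigroup.lift (fun x => if x then lB n else lA n)

lemma θmap_ga (n : ℕ) : θmap n ga = lA n := FreeSemigroup.lift_of _ _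

lemma θmap_gb (n : ℕ) : θmap n gb = lB n := FreeSemigroup.lift_of _ _

lemma θmap_mul_apply (n : ℕ) (u v : FreeSemigroup Bool) (t : Tg) :
    θmap n (u * v) t = θmap n u (θmap n v t) := by
  rw [map_mul]; rfl

lemma θmap_apow (n i : ℕ) (hi : 1 ≤ i) : θmap n (apow i) = (lA n)^[i] := by
  induction i with
  | zero => omega
  | succ i ih =>
    rcases Nat.lt_or_ge i 1 with h1 | h1
    · have : i = 0 := by omega
      subst this
      simpa [apow_one] using θmap_ga n
    · rw [apow_succ i h1, map_mul, θmap_ga, ih h1]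
      exact (Function.iterate_succ _ _).symm

lemma lA_iter_zero (n k : ℕ) : (lA n)^[k] .zero = .zero := by
  induction k with
  | zero => rfl
  | succ k ih => rw [Function.iterate_succ_apply]; exact ih

lemma lA_iter_A (n k i : ℕ) (hk : 1 ≤ k) :
    (lA n)^[k] (.A i) = if i + k ≤ n then .A (i + k) else .zero := by
  induction k with
  | zero => omega
  | succ k ih =>
    rcases Nat.lt_or_ge k 1 with h1 | h1
    · have : k = 0 := by omega
      subst this
      simp
    · rw [Function.iterate_succ_apply', ih h1]
      by_cases h2 : i + k ≤ n
      · rw [if_pos h2, lA_A]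
        by_cases h3 : i + k + 1 ≤ n
        · rw [if_pos h3, if_pos (show i + (k+1) ≤ n by omega)]; rfl
        · rw [if_neg h3, if_neg (show ¬ i + (k+1) ≤ n by omega)]
      · rw [if_neg h2, lA_zero, if_neg (by omega)]

lemma lA_iter_AB (n k i : ℕ) (hk : 1 ≤ k) :
    (lA n)^[k] (.AB i) = if i + k ≤ n then .AB (i + k) else .zero := by
  induction k with
  | zero => omega
  | succ k ih =>
    rcases Nat.lt_or_ge k 1 with h1 | h1
    · have : k = 0 := by omega
      subst this
      simp
    · rw [Function.iterate_succ_apply', ih h1]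
      by_cases h2 : i + k ≤ n
      · rw [if_pos h2, lA_AB]
        by_cases h3 : i + k + 1 ≤ n
        · rw [if_pos h3, if_pos (show i + (k+1) ≤ n by omega)]; rfl
        · rw [if_neg h3, if_neg (show ¬ i + (k+1) ≤ n by omega)]
      · rw [if_neg h2, lA_zero, if_neg (by omega)]

lemma lA_iter_BA (n k j : ℕ) (hk : 1 ≤ k) : (lA n)^[k] (.BA j) = .zero := by
  obtain ⟨m, rfl⟩ : ∃ m, k = m + 1 := ⟨k - 1, by omega⟩
  rw [Function.iterate_succ_apply, lA_BA, lA_iter_zero]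

lemma lA_iter_one (n k : ℕ) (hk : 1 ≤ k) :
    (lA n)^[k] .one = if k ≤ n then .A k else .zero := by
  obtain ⟨m, rfl⟩ : ∃ m, k = m + 1 := ⟨k - 1, by omega⟩
  rw [Function.iterate_succ_apply, lA_one]
  by_cases hn : 1 ≤ n
  · rw [if_pos hn]
    rcases Nat.lt_or_ge m 1 with h1 | h1
    · have : m = 0 := by omega
      subst this
      simp [hn]
    · rw [lA_iter_A n m 1 h1]
      by_cases h2 : 1 + m ≤ n
      · rw [if_pos h2, if_pos (by omega)]
        congr 1
        omega
      · rw [if_neg h2, if_neg (by omega)]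
  · rw [if_neg hn, lA_iter_zero, if_neg (by omega)]

lemma θ_rel1 (n : ℕ) (t : Tg) : θmap n (apow (n + 1)) t = .zero := by
  rw [θmap_apow n (n+1) (by omega)]
  cases t with
  | one => rw [lA_iter_one n _ (by omega), if_neg (by omega)]
  | zero => exact lA_iter_zero n _
  | A i => rw [lA_iter_A n _ i (by omega), if_neg (by omega)]
  | AB i => rw [lA_iter_AB n _ i (by omega), if_neg (by omega)]
  | BA j => exact lA_iter_BA n _ j (by omega)

lemma θ_rel2 (n : ℕ) (t : Tg) : θmap n (gb * gb) t = .zero := by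
  rw [θmap_mul_apply, θmap_gb]
  cases t <;> simp [apply_ite (lB n)]

lemma θ_rel3 (n : ℕ) (t : Tg) : θmap n (ga * gb * ga) t = .zero := by
  rw [θmap_mul_apply, θmap_mul_apply, θmap_ga, θmap_gb]
  cases t <;> simp [apply_ite (lB n), apply_ite (lA n)]

lemma θ_rel4 (n i : ℕ) (hi : 1 ≤ i) (t : Tg) :
    θmap n (gb * apow i * gb) t = .zero := by
  rw [θmap_mul_apply, θmap_mul_apply, θmap_gb, θmap_apow n i hi]
  cases t with
  | one =>
    rw [lB_one, lA_iter_AB n i 0 hi]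
    split <;> rfl
  | zero => rw [lB_zero, lA_iter_zero, lB_zero]
  | A j =>
    rw [lB_A]
    by_cases h : j ≤ n
    · rw [if_pos h, lA_iter_BA n i j hi, lB_zero]
    · rw [if_neg h, lA_iter_zero, lB_zero]
  | AB j => rw [lB_AB, lA_iter_zero, lB_zero]
  | BA j => rw [lB_BA, lA_iter_zero, lB_zero]

/-- Extension of the representation to `W2`, killing `0`. -/
def ΘW (n : ℕ) (w : W2) : Tg → Tg :=
  WithZero.recZeroCoe (fun _ => Tg.zero) (fun u => θmap n u) w

lemma ΘW_zero (n : ℕ) : ΘW n 0 = fun _ => Tg.zero := rfl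

lemma ΘW_coe (n : ℕ) (u : FreeSemigroup Bool) : ΘW n (↑u) = θmap n u := rfl

lemma θmap_fix_zero (n : ℕ) (u : FreeSemigroup Bool) : θmap n u Tg.zero = Tg.zero := by
  induction u using FreeSemigroup.recOnMul with
  | ih1 x =>
    cases x
    · rw [show FreeSemigroup.of false = ga from rfl, θmap_ga, lA_zero]
    · rw [show FreeSemigroup.of true = gb from rfl, θmap_gb, lB_zero]
  | ih2 u v hu hv => rw [θmap_mul_apply, hv, hu]

lemma ΘW_mul_apply (n : ℕ) (x y : W2) (t : Tg) :
    ΘW n (x * y) t = ΘW n x (ΘW n y t) := by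
  rcases x with _ | u
  · show ΘW n (0 * y) t = ΘW n 0 (ΘW n y t)
    rw [zero_mul]; rfl
  · rcases y with _ | v
    · show ΘW n ((↑u : W2) * 0) t = ΘW n (↑u : W2) (ΘW n 0 t)
      rw [mul_zero, ΘW_zero, ΘW_coe]
      exact (θmap_fix_zero n u).symm
    · show ΘW n ((↑u : W2) * (↑v : W2)) t = ΘW n (↑u : W2) (ΘW n (↑v : W2) t)
      rw [← WithZero.coe_mul, ΘW_coe, ΘW_coe, ΘW_coe, θmap_mul_apply]

/-- The kernel congruence of `ΘW`. -/
def ΘCon (n : ℕ) : Con W2 where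
  r x y := ΘW n x = ΘW n y
  iseqv := ⟨fun _ => rfl, Eq.symm, Eq.trans⟩
  mul' := fun {a b c d} h1 h2 => by
    funext t
    rw [ΘW_mul_apply, ΘW_mul_apply, h1, h2]

lemma snCon_le (n : ℕ) : SnCon n ≤ ΘCon n := by
  apply Con.conGen_le.mpr
  rintro x y (⟨rfl, rfl⟩ | ⟨rfl, rfl⟩ | ⟨rfl, rfl⟩ | ⟨i, hi, rfl, rfl⟩) <;>
    funext t
  · exact θ_rel1 n t
  · exact θ_rel2 n t
  · exact θ_rel3 n t
  · exact θ_rel4 n i hi t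

lemma smk_eq_imp (n : ℕ) {u v : W2} (h : smk n u = smk n v) : ΘW n u = ΘW n v :=
  snCon_le n ((Con.eq _).mp h)

/-- Evaluation of the tag of an element of `Sₙ`. -/
def evS (n : ℕ) : Sn n → Tg := fun x =>
  Con.liftOn x (fun w => ΘW n w Tg.one)
    (fun a b h => congrFun (snCon_le n h) Tg.one)

lemma evS_mk (n : ℕ) (w : W2) : evS n (smk n w) = ΘW n w Tg.one := rfl

end TagModel


section SnProducts

variable (n : ℕ)

/-- Coercion of a word into `Sₙ`. -/
def zc (w : FreeSemigroup Bool) : Sn n := smk n ↑w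

lemma smk_mul (x y : W2) : smk n (x * y) = smk n x * smk n y := rfl

lemma smk_zero : smk n 0 = 0 := rfl

lemma zc_mul (u v : FreeSemigroup Bool) : zc n (u * v) = zc n u * zc n v := by
  unfold zc
  rw [WithZero.coe_mul]
  rfl

lemma zrel {p : W2} (h : SnRel n p 0) : smk n p = 0 := by
  have hc : SnCon n p 0 := ConGen.Rel.of _ _ h
  exact ((Con.eq _).mpr hc).trans rfl

lemma zr1 : zc n (apow (n + 1)) = 0 := zrel n (Or.inl ⟨rfl, rfl⟩)
lemma zr2 : zc n (gb * gb) = 0 := zrel n (Or.inr (Or.inl ⟨rfl, rfl⟩))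
lemma zr3 : zc n (ga * gb * ga) = 0 := zrel n (Or.inr (Or.inr (Or.inl ⟨rfl, rfl⟩)))
lemma zr4 (i : ℕ) (hi : 1 ≤ i) : zc n (gb * apow i * gb) = 0 :=
  zrel n (Or.inr (Or.inr (Or.inr ⟨i, hi, rfl, rfl⟩)))

lemma zc_zero_right {r : FreeSemigroup Bool} (h : zc n r = 0) (u : FreeSemigroup Bool) :
    zc n (u * r) = 0 := by rw [zc_mul, h, mul_zero]

lemma zc_zero_left {r : FreeSemigroup Bool} (h : zc n r = 0) (v : FreeSemigroup Bool) :
    zc n (r * v) = 0 := by rw [zc_mul, h, zero_mul]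

lemma zc_apow_zero {m : ℕ} (hm : n + 1 ≤ m) : zc n (apow m) = 0 := by
  rcases Nat.eq_or_lt_of_le hm with h | h
  · rw [← h]; exact zr1 n
  · rw [show m = (n + 1) + (m - (n + 1)) by omega,
      apow_add _ _ (by omega) (by omega)]
    exact zc_zero_left n (zr1 n) _

lemma zc_aba {i j : ℕ} (hi : 1 ≤ i) (hj : 1 ≤ j) :
    zc n (apow i * gb * apow j) = 0 := by
  rcases Nat.eq_or_lt_of_le hi with h1 | h1 <;> rcases Nat.eq_or_lt_of_le hj with h2 | h2
  · rw [← h1, ← h2]; exact zr3 n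
  · rw [← h1, show j = 1 + (j - 1) by omega, apow_add _ _ (by omega) (by omega),
      show apow 1 * gb * (apow 1 * apow (j-1)) = (ga * gb * ga) * apow (j-1) by
        simp only [apow_one, mul_assoc]]
    exact zc_zero_left n (zr3 n) _
  · rw [← h2, show i = (i - 1) + 1 by omega, apow_add _ _ (by omega) (by omega),
      show apow (i-1) * apow 1 * gb * apow 1 = apow (i-1) * (ga * gb * ga) by
        simp only [apow_one, mul_assoc]]
    exact zc_zero_right n (zr3 n) _
  · rw [show i = (i - 1) + 1 by omega, apow_add _ _ (by omega) (by omega),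
      show j = 1 + (j - 1) by omega, apow_add _ _ (by omega) (by omega),
      show apow (i-1) * apow 1 * gb * (apow 1 * apow (j-1)) =
          apow (i-1) * ((ga * gb * ga) * apow (j-1)) by
        simp only [apow_one, mul_assoc]]
    exact zc_zero_right n (zc_zero_left n (zr3 n) _) _

lemma zc_bab {i : ℕ} (hi : 1 ≤ i) : zc n (gb * (apow i * gb)) = 0 := by
  rw [show gb * (apow i * gb) = gb * apow i * gb by rw [mul_assoc]]
  exact zr4 n i hi

-- products
lemma P_aa {i j : ℕ} (hi : 1 ≤ i) (hj : 1 ≤ j) :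
    zc n (apow i) * zc n (apow j) = zc n (apow (i + j)) := by
  rw [← zc_mul, apow_add i j hi hj]

lemma P_ab {i j : ℕ} (hi : 1 ≤ i) :
    zc n (apow i) * zc n (nbw j) = zc n (nbw (i + j)) := by
  rcases Nat.eq_zero_or_pos j with h | h
  · subst h
    rw [← zc_mul]
    unfold nbw
    rw [if_pos rfl, if_neg (by omega), Nat.add_zero]
  · rw [← zc_mul]
    unfold nbw
    rw [if_neg (by omega), if_neg (by omega), ← mul_assoc, ← apow_add i j hi h]

lemma zc_nbw_zero {m : ℕ} (hm : n + 1 ≤ m) : zc n (nbw m) = 0 := by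
  unfold nbw
  rw [if_neg (by omega)]
  exact zc_zero_left n (zc_apow_zero n hm) _

lemma P_ba {i j : ℕ} (hi : 1 ≤ i) (hj : 1 ≤ j) :
    zc n (nbw i) * zc n (apow j) = 0 := by
  rw [← zc_mul]
  unfold nbw
  rw [if_neg (by omega)]
  exact zc_aba n hi hj

lemma P_b0a {j : ℕ} : zc n (nbw 0) * zc n (apow j) = zc n (ncw j) := by
  rw [← zc_mul]; rfl

lemma P_bb {i j : ℕ} : zc n (nbw i) * zc n (nbw j) = 0 := by
  rw [← zc_mul]
  unfold nbw
  rcases Nat.eq_zero_or_pos i with h1 | h1 <;> rcases Nat.eq_zero_or_pos j with h2 | h2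
  · subst h1; subst h2
    rw [if_pos rfl]
    exact zr2 n
  · subst h1
    rw [if_pos rfl, if_neg (by omega)]
    exact zc_bab n h2
  · subst h2
    rw [if_pos rfl, if_neg (by omega),
      show apow i * gb * gb = apow i * (gb * gb) by rw [mul_assoc]]
    exact zc_zero_right n (zr2 n) _
  · rw [if_neg (by omega), if_neg (by omega),
      show apow i * gb * (apow j * gb) = apow i * (gb * (apow j * gb)) by
        simp only [mul_assoc]]
    exact zc_zero_right n (zc_bab n h2) _

lemma P_bc {i j : ℕ} : zc n (nbw i) * zc n (ncw j) = 0 := by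
  rw [← zc_mul]
  unfold nbw ncw
  rcases Nat.eq_zero_or_pos i with h1 | h1
  · subst h1
    rw [if_pos rfl, ← mul_assoc]
    exact zc_zero_left n (zr2 n) _
  · rw [if_neg (by omega),
      show apow i * gb * (gb * apow j) = apow i * (gb * gb * apow j) by
        simp only [mul_assoc]]
    exact zc_zero_right n (zc_zero_left n (zr2 n) _) _

lemma P_ca {j k : ℕ} (hj : 1 ≤ j) (hk : 1 ≤ k) :
    zc n (ncw j) * zc n (apow k) = zc n (ncw (j + k)) := by
  rw [← zc_mul]
  unfold ncw
  rw [mul_assoc, ← apow_add j k hj hk]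

lemma zc_ncw_zero {m : ℕ} (hm : n + 1 ≤ m) : zc n (ncw m) = 0 := by
  unfold ncw
  exact zc_zero_right n (zc_apow_zero n hm) _

lemma P_cb {j k : ℕ} (hj : 1 ≤ j) : zc n (ncw j) * zc n (nbw k) = 0 := by
  rw [← zc_mul]
  unfold ncw nbw
  rcases Nat.eq_zero_or_pos k with h2 | h2
  · subst h2
    rw [if_pos rfl]
    exact zr4 n j hj
  · rw [if_neg (by omega),
      show gb * apow j * (apow k * gb) = gb * apow (j + k) * gb by
        rw [apow_add j k hj h2]; simp only [mul_assoc]]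
    exact zr4 n (j + k) (by omega)

lemma P_cc {j k : ℕ} (hj : 1 ≤ j) : zc n (ncw j) * zc n (ncw k) = 0 := by
  rw [← zc_mul]
  unfold ncw
  rw [show gb * apow j * (gb * apow k) = gb * apow j * gb * apow k by
    simp only [mul_assoc]]
  exact zc_zero_left n (zr4 n j hj) _

lemma P_ac {i j : ℕ} (hi : 1 ≤ i) (hj : 1 ≤ j) :
    zc n (apow i) * zc n (ncw j) = 0 := by
  rw [← zc_mul]
  unfold ncw
  rw [← mul_assoc]
  exact zc_aba n hi hj

-- evaluation
lemma evS_zero : evS n (0 : Sn n) = Tg.zero := rfl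

lemma evS_apow {i : ℕ} (h1 : 1 ≤ i) (h2 : i ≤ n) : evS n (zc n (apow i)) = Tg.A i := by
  show ΘW n (↑(apow i)) Tg.one = _
  rw [ΘW_coe, θmap_apow n i h1, lA_iter_one n i h1, if_pos h2]

lemma evS_nbw {i : ℕ} (h2 : i ≤ n) : evS n (zc n (nbw i)) = Tg.AB i := by
  show ΘW n (↑(nbw i)) Tg.one = _
  rw [ΘW_coe]
  unfold nbw
  rcases Nat.eq_zero_or_pos i with h | h
  · subst h
    rw [if_pos rfl, θmap_gb, lB_one]
  · rw [if_neg (by omega), θmap_mul_apply, θmap_gb, θmap_apow n i h, lB_one,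
      lA_iter_AB n i 0 h]
    rw [if_pos (by omega), Nat.zero_add]

lemma evS_ncw {j : ℕ} (h1 : 1 ≤ j) (h2 : j ≤ n) : evS n (zc n (ncw j)) = Tg.BA j := by
  show ΘW n (↑(ncw j)) Tg.one = _
  rw [ΘW_coe]
  unfold ncw
  rw [θmap_mul_apply, θmap_gb, θmap_apow n j h1, lA_iter_one n j h1, if_pos h2, lB_A,
    if_pos h2]

-- injectivity consequences
lemma zc_apow_ne_zero {i : ℕ} (h1 : 1 ≤ i) (h2 : i ≤ n) : zc n (apow i) ≠ 0 := fun h => by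
  have := congrArg (evS n) h
  rw [evS_apow n h1 h2, evS_zero] at this
  exact Tg.noConfusion this

lemma zc_nbw_ne_zero {i : ℕ} (h2 : i ≤ n) : zc n (nbw i) ≠ 0 := fun h => by
  have := congrArg (evS n) h
  rw [evS_nbw n h2, evS_zero] at this
  exact Tg.noConfusion this

lemma zc_ncw_ne_zero {j : ℕ} (h1 : 1 ≤ j) (h2 : j ≤ n) : zc n (ncw j) ≠ 0 := fun h => by
  have := congrArg (evS n) h
  rw [evS_ncw n h1 h2, evS_zero] at this
  exact Tg.noConfusion this

lemma zc_nbw_ne_ncw {i j : ℕ} (h2 : i ≤ n) (h3 : 1 ≤ j) (h4 : j ≤ n) :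
    zc n (nbw i) ≠ zc n (ncw j) := fun h => by
  have := congrArg (evS n) h
  rw [evS_nbw n h2, evS_ncw n h3 h4] at this
  exact Tg.noConfusion this

/-- Normal-form classification predicate. -/
def SnNF (x : Sn n) : Prop :=
  x = 0 ∨ (∃ i, 1 ≤ i ∧ i ≤ n ∧ x = zc n (apow i)) ∨
    (∃ i, i ≤ n ∧ x = zc n (nbw i)) ∨ (∃ j, 1 ≤ j ∧ j ≤ n ∧ x = zc n (ncw j))

lemma snClassify (hn : 1 ≤ n) : ∀ x : Sn n, SnNF n x := by
  intro x
  induction x using Con.induction_on with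
  | H w =>
    rcases w with _ | u
    · exact Or.inl rfl
    · show SnNF n (zc n u)
      induction u using FreeSemigroup.recOnMul with
      | ih1 x =>
        cases x
        · exact Or.inr (Or.inl ⟨1, le_refl 1, hn, rfl⟩)
        · exact Or.inr (Or.inr (Or.inl ⟨0, Nat.zero_le n, rfl⟩))
      | ih2 u v hu hv =>
        rw [zc_mul]
        rcases hu with h1 | ⟨i, hi1, hi2, h1⟩ | ⟨i, hi2, h1⟩ | ⟨i, hi1, hi2, h1⟩ <;>
          rcases hv with h2 | ⟨j, hj1, hj2, h2⟩ | ⟨j, hj2, h2⟩ | ⟨j, hj1, hj2, h2⟩ <;>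
          rw [h1, h2]
        -- 0 * _
        · exact Or.inl (by rw [zero_mul])
        · exact Or.inl (by rw [zero_mul])
        · exact Or.inl (by rw [zero_mul])
        · exact Or.inl (by rw [zero_mul])
        -- a^i * _
        · exact Or.inl (by rw [mul_zero])
        · rw [P_aa n hi1 hj1]
          by_cases h : i + j ≤ n
          · exact Or.inr (Or.inl ⟨i + j, by omega, h, rfl⟩)
          · exact Or.inl (zc_apow_zero n (by omega))
        · rw [P_ab n hi1]
          by_cases h : i + j ≤ n
          · exact Or.inr (Or.inr (Or.inl ⟨i + j, h, rfl⟩))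
          · exact Or.inl (zc_nbw_zero n (by omega))
        · exact Or.inl (P_ac n hi1 hj1)
        -- a^i b * _
        · exact Or.inl (by rw [mul_zero])
        · rcases Nat.eq_zero_or_pos i with h | h
          · subst h
            rw [P_b0a n]
            by_cases hj : j ≤ n
            · exact Or.inr (Or.inr (Or.inr ⟨j, hj1, hj, rfl⟩))
            · exact Or.inl (zc_ncw_zero n (by omega))
          · exact Or.inl (P_ba n h hj1)
        · exact Or.inl (P_bb n)
        · exact Or.inl (P_bc n)
        -- b a^i * _
        · exact Or.inl (by rw [mul_zero])
        · rw [P_ca n hi1 hj1]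
          by_cases h : i + j ≤ n
          · exact Or.inr (Or.inr (Or.inr ⟨i + j, by omega, h, rfl⟩))
          · exact Or.inl (zc_ncw_zero n (by omega))
        · exact Or.inl (P_cb n hi1)
        · exact Or.inl (P_cc n hi1)

end SnProducts


section S1Model

/-- Tags for normal forms of `S₁`. -/
inductive Tg1 : Type
  | one | zero | a | b | ab | ba
  deriving DecidableEq

/-- Left multiplication by `a` on `S₁`-tags. -/
def mA : Tg1 → Tg1
  | .one => .a
  | .zero => .zero
  | .a => .zero
  | .b => .ab
  | .ab => .zero
  | .ba => .zero

/-- Left multiplication by `b` on `S₁`-tags. -/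
def mB : Tg1 → Tg1
  | .one => .b
  | .zero => .zero
  | .a => .ba
  | .b => .zero
  | .ab => .zero
  | .ba => .zero

/-- The representation of the free semigroup on `S₁`-tags. -/
def θ1 : FreeSemigroup Bool →ₙ* Function.End Tg1 :=
  FreeSemigroup.lift (fun x => if x then mB else mA)

lemma θ1_ga1 : θ1 ga1 = mA := FreeSemigroup.lift_of _ _
lemma θ1_gb1 : θ1 gb1 = mB := FreeSemigroup.lift_of _ _

lemma θ1_mul_apply (u v : FreeSemigroup Bool) (t : Tg1) :
    θ1 (u * v) t = θ1 u (θ1 v t) := by rw [map_mul]; rfl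

lemma θ1_rel1 (t : Tg1) : θ1 (ga1 * ga1) t = .zero := by
  rw [θ1_mul_apply, θ1_ga1]; cases t <;> rfl

lemma θ1_rel2 (t : Tg1) : θ1 (gb1 * gb1) t = .zero := by
  rw [θ1_mul_apply, θ1_gb1]; cases t <;> rfl

lemma θ1_rel3 (t : Tg1) : θ1 (ga1 * gb1 * ga1) t = .zero := by
  rw [θ1_mul_apply, θ1_mul_apply, θ1_ga1, θ1_gb1]; cases t <;> rfl

lemma θ1_rel4 (t : Tg1) : θ1 (gb1 * ga1 * gb1) t = .zero := by
  rw [θ1_mul_apply, θ1_mul_apply, θ1_ga1, θ1_gb1]; cases t <;> rfl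

/-- Extension of the representation to `W2'`, killing `0`. -/
def Θ1 (w : W2') : Tg1 → Tg1 :=
  WithZero.recZeroCoe (fun _ => Tg1.zero) (fun u => θ1 u) w

lemma Θ1_zero : Θ1 0 = fun _ => Tg1.zero := rfl
lemma Θ1_coe (u : FreeSemigroup Bool) : Θ1 (↑u) = θ1 u := rfl

lemma θ1_fix_zero (u : FreeSemigroup Bool) : θ1 u Tg1.zero = Tg1.zero := by
  induction u using FreeSemigroup.recOnMul with
  | ih1 x =>
    cases x
    · rw [show FreeSemigroup.of false = ga1 from rfl, θ1_ga1]; rfl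
    · rw [show FreeSemigroup.of true = gb1 from rfl, θ1_gb1]; rfl
  | ih2 u v hu hv => rw [θ1_mul_apply, hv, hu]

lemma Θ1_mul_apply (x y : W2') (t : Tg1) : Θ1 (x * y) t = Θ1 x (Θ1 y t) := by
  rcases x with _ | u
  · show Θ1 (0 * y) t = Θ1 0 (Θ1 y t)
    rw [zero_mul]; rfl
  · rcases y with _ | v
    · show Θ1 ((↑u : W2') * 0) t = Θ1 (↑u : W2') (Θ1 0 t)
      rw [mul_zero, Θ1_zero, Θ1_coe]
      exact (θ1_fix_zero u).symm
    · show Θ1 ((↑u : W2') * (↑v : W2')) t = Θ1 (↑u : W2') (Θ1 (↑v : W2') t)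
      rw [← WithZero.coe_mul, Θ1_coe, Θ1_coe, Θ1_coe, θ1_mul_apply]

/-- The kernel congruence of `Θ1`. -/
def Θ1Con : Con W2' where
  r x y := Θ1 x = Θ1 y
  iseqv := ⟨fun _ => rfl, Eq.symm, Eq.trans⟩
  mul' := fun {a b c d} h1 h2 => by
    funext t
    rw [Θ1_mul_apply, Θ1_mul_apply, h1, h2]

lemma s1Con_le : S1Con ≤ Θ1Con := by
  apply Con.conGen_le.mpr
  rintro x y (⟨rfl, rfl⟩ | ⟨rfl, rfl⟩ | ⟨rfl, rfl⟩ | ⟨rfl, rfl⟩) <;> funext t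
  · exact θ1_rel1 t
  · exact θ1_rel2 t
  · exact θ1_rel3 t
  · exact θ1_rel4 t

/-- Evaluation of the tag of an element of `S₁`. -/
def ev1 : S1 → Tg1 := fun x =>
  Con.liftOn x (fun w => Θ1 w Tg1.one)
    (fun a b h => congrFun (s1Con_le h) Tg1.one)

/-- Coercion of a word into `S₁`. -/
def z1 (w : FreeSemigroup Bool) : S1 := s1mk ↑w

lemma s1mk_mul (x y : W2') : s1mk (x * y) = s1mk x * s1mk y := rfl
lemma s1mk_zero : s1mk 0 = 0 := rfl

lemma z1_mul (u v : FreeSemigroup Bool) : z1 (u * v) = z1 u * z1 v := by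
  unfold z1
  rw [WithZero.coe_mul]
  rfl

lemma z1rel {p : W2'} (h : S1Rel p 0) : s1mk p = 0 := by
  have hc : S1Con p 0 := ConGen.Rel.of _ _ h
  exact ((Con.eq _).mpr hc).trans rfl

lemma q1 : z1 (ga1 * ga1) = 0 := z1rel (Or.inl ⟨rfl, rfl⟩)
lemma q2 : z1 (gb1 * gb1) = 0 := z1rel (Or.inr (Or.inl ⟨rfl, rfl⟩))
lemma q3 : z1 (ga1 * gb1 * ga1) = 0 := z1rel (Or.inr (Or.inr (Or.inl ⟨rfl, rfl⟩)))
lemma q4 : z1 (gb1 * ga1 * gb1) = 0 := z1rel (Or.inr (Or.inr (Or.inr ⟨rfl, rfl⟩)))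

lemma z1_zero_right {r : FreeSemigroup Bool} (h : z1 r = 0) (u : FreeSemigroup Bool) :
    z1 (u * r) = 0 := by rw [z1_mul, h, mul_zero]

lemma z1_zero_left {r : FreeSemigroup Bool} (h : z1 r = 0) (v : FreeSemigroup Bool) :
    z1 (r * v) = 0 := by rw [z1_mul, h, zero_mul]

-- the full product table of S₁ on nonzero elements
lemma Q_aa : z1 ga1 * z1 ga1 = 0 := by rw [← z1_mul]; exact q1
lemma Q_bb : z1 gb1 * z1 gb1 = 0 := by rw [← z1_mul]; exact q2
lemma Q_ab : z1 ga1 * z1 gb1 = z1 (ga1 * gb1) := (z1_mul _ _).symm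
lemma Q_ba : z1 gb1 * z1 ga1 = z1 (gb1 * ga1) := (z1_mul _ _).symm
lemma Q_a_ab : z1 ga1 * z1 (ga1 * gb1) = 0 := by
  rw [← z1_mul, ← mul_assoc]
  exact z1_zero_left q1 _
lemma Q_a_ba : z1 ga1 * z1 (gb1 * ga1) = 0 := by
  rw [← z1_mul, ← mul_assoc]
  exact q3
lemma Q_b_ab : z1 gb1 * z1 (ga1 * gb1) = 0 := by
  rw [← z1_mul, ← mul_assoc]
  exact q4
lemma Q_b_ba : z1 gb1 * z1 (gb1 * ga1) = 0 := by
  rw [← z1_mul, ← mul_assoc]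
  exact z1_zero_left q2 _
lemma Q_ab_a : z1 (ga1 * gb1) * z1 ga1 = 0 := by
  rw [← z1_mul]
  exact q3
lemma Q_ab_b : z1 (ga1 * gb1) * z1 gb1 = 0 := by
  rw [← z1_mul, mul_assoc]
  exact z1_zero_right q2 _
lemma Q_ab_ab : z1 (ga1 * gb1) * z1 (ga1 * gb1) = 0 := by
  rw [← z1_mul, show ga1 * gb1 * (ga1 * gb1) = ga1 * (gb1 * ga1 * gb1) by
    simp only [mul_assoc]]
  exact z1_zero_right q4 _
lemma Q_ab_ba : z1 (ga1 * gb1) * z1 (gb1 * ga1) = 0 := by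
  rw [← z1_mul, show ga1 * gb1 * (gb1 * ga1) = ga1 * (gb1 * gb1 * ga1) by
    simp only [mul_assoc]]
  exact z1_zero_right (z1_zero_left q2 _) _
lemma Q_ba_a : z1 (gb1 * ga1) * z1 ga1 = 0 := by
  rw [← z1_mul, mul_assoc]
  exact z1_zero_right q1 _
lemma Q_ba_b : z1 (gb1 * ga1) * z1 gb1 = 0 := by
  rw [← z1_mul]
  exact q4
lemma Q_ba_ab : z1 (gb1 * ga1) * z1 (ga1 * gb1) = 0 := by
  rw [← z1_mul, show gb1 * ga1 * (ga1 * gb1) = gb1 * (ga1 * ga1 * gb1) by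
    simp only [mul_assoc]]
  exact z1_zero_right (z1_zero_left q1 _) _
lemma Q_ba_ba : z1 (gb1 * ga1) * z1 (gb1 * ga1) = 0 := by
  rw [← z1_mul, show gb1 * ga1 * (gb1 * ga1) = gb1 * (ga1 * gb1 * ga1) by
    simp only [mul_assoc]]
  exact z1_zero_right q3 _

-- evaluation
lemma ev1_zero : ev1 (0 : S1) = Tg1.zero := rfl
lemma ev1_a : ev1 (z1 ga1) = Tg1.a := by
  show Θ1 (↑ga1) Tg1.one = _
  rw [Θ1_coe, θ1_ga1]; rfl
lemma ev1_b : ev1 (z1 gb1) = Tg1.b := by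
  show Θ1 (↑gb1) Tg1.one = _
  rw [Θ1_coe, θ1_gb1]; rfl
lemma ev1_ab : ev1 (z1 (ga1 * gb1)) = Tg1.ab := by
  show Θ1 (↑(ga1 * gb1)) Tg1.one = _
  rw [Θ1_coe, θ1_mul_apply, θ1_ga1, θ1_gb1]; rfl
lemma ev1_ba : ev1 (z1 (gb1 * ga1)) = Tg1.ba := by
  show Θ1 (↑(gb1 * ga1)) Tg1.one = _
  rw [Θ1_coe, θ1_mul_apply, θ1_ga1, θ1_gb1]; rfl

/-- Normal-form classification predicate for `S₁`. -/
def S1NF (x : S1) : Prop :=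
  x = 0 ∨ x = z1 ga1 ∨ x = z1 gb1 ∨ x = z1 (ga1 * gb1) ∨ x = z1 (gb1 * ga1)

lemma s1Classify : ∀ x : S1, S1NF x := by
  intro x
  induction x using Con.induction_on with
  | H w =>
    rcases w with _ | u
    · exact Or.inl rfl
    · show S1NF (z1 u)
      induction u using FreeSemigroup.recOnMul with
      | ih1 x =>
        cases x
        · exact Or.inr (Or.inl rfl)
        · exact Or.inr (Or.inr (Or.inl rfl))
      | ih2 u v hu hv =>
        rw [z1_mul]
        rcases hu with h1 | h1 | h1 | h1 | h1 <;>
          rcases hv with h2 | h2 | h2 | h2 | h2 <;> rw [h1, h2]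
        · exact Or.inl (by rw [zero_mul])
        · exact Or.inl (by rw [zero_mul])
        · exact Or.inl (by rw [zero_mul])
        · exact Or.inl (by rw [zero_mul])
        · exact Or.inl (by rw [zero_mul])
        · exact Or.inl (by rw [mul_zero])
        · exact Or.inl Q_aa
        · exact Or.inr (Or.inr (Or.inr (Or.inl Q_ab)))
        · exact Or.inl Q_a_ab
        · exact Or.inl Q_a_ba
        · exact Or.inl (by rw [mul_zero])
        · exact Or.inr (Or.inr (Or.inr (Or.inr Q_ba)))
        · exact Or.inl Q_bb
        · exact Or.inl Q_b_ab
        · exact Or.inl Q_b_ba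
        · exact Or.inl (by rw [mul_zero])
        · exact Or.inl Q_ab_a
        · exact Or.inl Q_ab_b
        · exact Or.inl Q_ab_ab
        · exact Or.inl Q_ab_ba
        · exact Or.inl (by rw [mul_zero])
        · exact Or.inl Q_ba_a
        · exact Or.inl Q_ba_b
        · exact Or.inl Q_ba_ab
        · exact Or.inl Q_ba_ba

end S1Model


section NUFacts

variable (n : ℕ)

/-- The null union `Sₙ • S₁`. -/
abbrev NU (n : ℕ) := NullUnion (Sn n) S1

/-- Embedding of `Sₙ` into the null union. -/
def eS (s : Sn n) : NU n := ⟨(s, 0), Or.inr rfl⟩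

/-- Embedding of `S₁` into the null union. -/
def eT (t : S1) : NU n := ⟨(0, t), Or.inl rfl⟩

lemma NU_ext {x y : NU n} (h1 : x.1.1 = y.1.1) (h2 : x.1.2 = y.1.2) : x = y :=
  Subtype.ext (Prod.ext h1 h2)

lemma NU_mul_fst (x y : NU n) : (x * y).1.1 = x.1.1 * y.1.1 := rfl
lemma NU_mul_snd (x y : NU n) : (x * y).1.2 = x.1.2 * y.1.2 := rfl

lemma eS_fst (s : Sn n) : (eS n s).1.1 = s := rfl
lemma eS_snd (s : Sn n) : (eS n s).1.2 = 0 := rfl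
lemma eT_fst (t : S1) : (eT n t).1.1 = 0 := rfl
lemma eT_snd (t : S1) : (eT n t).1.2 = t := rfl

lemma eS_mul (s s' : Sn n) : eS n s * eS n s' = eS n (s * s') :=
  NU_ext n rfl (by rw [NU_mul_snd, eS_snd, eS_snd, mul_zero]; rfl)

lemma eT_mul (t t' : S1) : eT n t * eT n t' = eT n (t * t') :=
  NU_ext n (by rw [NU_mul_fst, eT_fst, eT_fst, mul_zero]; rfl) rfl

lemma zero_def : (0 : NU n) = ⟨(0, 0), Or.inl rfl⟩ := rfl

lemma eS_mul_eT (s : Sn n) (t : S1) : eS n s * eT n t = 0 :=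
  NU_ext n (by rw [NU_mul_fst, eS_fst, eT_fst, mul_zero]; rfl)
    (by rw [NU_mul_snd, eS_snd, eT_snd, zero_mul]; rfl)

lemma eT_mul_eS (s : Sn n) (t : S1) : eT n t * eS n s = 0 :=
  NU_ext n (by rw [NU_mul_fst, eS_fst, eT_fst, zero_mul]; rfl)
    (by rw [NU_mul_snd, eS_snd, eT_snd, mul_zero]; rfl)

lemma eS_zero : eS n 0 = 0 := NU_ext n rfl rfl
lemma eT_zero : eT n 0 = 0 := NU_ext n rfl rfl

/-- An element of `Sₙ` annihilating everything embeds into the center. -/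
lemma central_eS {s : Sn n} (h : ∀ y : Sn n, y * s = 0 ∧ s * y = 0) :
    eS n s ∈ Set.center (NU n) := by
  rw [Semigroup.mem_center_iff]
  intro g
  refine NU_ext n ?_ ?_
  · rw [NU_mul_fst, NU_mul_fst, eS_fst, (h g.1.1).1, (h g.1.1).2]
  · rw [NU_mul_snd, NU_mul_snd, eS_snd, mul_zero, zero_mul]

lemma central_eT {t : S1} (h : ∀ y : S1, y * t = 0 ∧ t * y = 0) :
    eT n t ∈ Set.center (NU n) := by
  rw [Semigroup.mem_center_iff]
  intro g
  refine NU_ext n ?_ ?_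
  · rw [NU_mul_fst, NU_mul_fst, eT_fst, mul_zero, zero_mul]
  · rw [NU_mul_snd, NU_mul_snd, eT_snd, (h g.1.2).1, (h g.1.2).2]

lemma central_zeroNU : (0 : NU n) ∈ Set.center (NU n) := by
  have := central_eS n (s := 0) (fun y => ⟨mul_zero y, zero_mul y⟩)
  rwa [eS_zero] at this

/-- `a^n b` annihilates `Sₙ`. -/
lemma ann_bn (hn : 1 ≤ n) (y : Sn n) :
    y * zc n (nbw n) = 0 ∧ zc n (nbw n) * y = 0 := by
  rcases snClassify n hn y with h | ⟨i, hi1, hi2, h⟩ | ⟨i, hi2, h⟩ | ⟨j, hj1, hj2, h⟩ <;>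
    subst h
  · exact ⟨zero_mul _, mul_zero _⟩
  · exact ⟨by rw [P_ab n hi1]; exact zc_nbw_zero n (by omega), P_ba n hn hi1⟩
  · exact ⟨P_bb n, P_bb n⟩
  · exact ⟨P_cb n hj1, P_bc n⟩

/-- `b a^n` annihilates `Sₙ`. -/
lemma ann_cn (hn : 1 ≤ n) (y : Sn n) :
    y * zc n (ncw n) = 0 ∧ zc n (ncw n) * y = 0 := by
  rcases snClassify n hn y with h | ⟨i, hi1, hi2, h⟩ | ⟨i, hi2, h⟩ | ⟨j, hj1, hj2, h⟩ <;>
    subst h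
  · exact ⟨zero_mul _, mul_zero _⟩
  · exact ⟨P_ac n hi1 hn, by rw [P_ca n hn hi1]; exact zc_ncw_zero n (by omega)⟩
  · exact ⟨P_bc n, P_cb n hn⟩
  · exact ⟨P_cc n hj1, P_cc n hn⟩

/-- `ab` annihilates `S₁`. -/
lemma ann_ab (y : S1) : y * z1 (ga1 * gb1) = 0 ∧ z1 (ga1 * gb1) * y = 0 := by
  rcases s1Classify y with h | h | h | h | h <;> subst h
  · exact ⟨zero_mul _, mul_zero _⟩
  · exact ⟨Q_a_ab, Q_ab_a⟩
  · exact ⟨Q_b_ab, Q_ab_b⟩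
  · exact ⟨Q_ab_ab, Q_ab_ab⟩
  · exact ⟨Q_ba_ab, Q_ab_ba⟩

/-- `ba` annihilates `S₁`. -/
lemma ann_ba (y : S1) : y * z1 (gb1 * ga1) = 0 ∧ z1 (gb1 * ga1) * y = 0 := by
  rcases s1Classify y with h | h | h | h | h <;> subst h
  · exact ⟨zero_mul _, mul_zero _⟩
  · exact ⟨Q_a_ba, Q_ba_a⟩
  · exact ⟨Q_b_ba, Q_ba_b⟩
  · exact ⟨Q_ab_ba, Q_ba_ab⟩
  · exact ⟨Q_ba_ba, Q_ba_ba⟩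

-- tags distinguish
lemma z1_a_ne_zero : z1 ga1 ≠ 0 := fun h => by
  have := congrArg ev1 h
  rw [ev1_a, ev1_zero] at this
  exact Tg1.noConfusion this

lemma z1_b_ne_zero : z1 gb1 ≠ 0 := fun h => by
  have := congrArg ev1 h
  rw [ev1_b, ev1_zero] at this
  exact Tg1.noConfusion this

lemma z1_ab_ne_ba : z1 (ga1 * gb1) ≠ z1 (gb1 * ga1) := fun h => by
  have := congrArg ev1 h
  rw [ev1_ab, ev1_ba] at this
  exact Tg1.noConfusion this

-- non-central elements
lemma noncent_a : eT n (z1 ga1) ∉ Set.center (NU n) := by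
  intro h
  rw [Semigroup.mem_center_iff] at h
  have := congrArg (fun x : NU n => x.1.2) (h (eT n (z1 gb1)))
  simp only [NU_mul_snd, eT_snd] at this
  rw [Q_ba, Q_ab] at this
  exact z1_ab_ne_ba this.symm

lemma noncent_b : eT n (z1 gb1) ∉ Set.center (NU n) := by
  intro h
  rw [Semigroup.mem_center_iff] at h
  have := congrArg (fun x : NU n => x.1.2) (h (eT n (z1 ga1)))
  simp only [NU_mul_snd, eT_snd] at this
  rw [Q_ba, Q_ab] at this
  exact z1_ab_ne_ba this

lemma noncent_apow (hn : 1 ≤ n) {i : ℕ} (h1 : 1 ≤ i) (h2 : i ≤ n) :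
    eS n (zc n (apow i)) ∉ Set.center (NU n) := by
  intro h
  rw [Semigroup.mem_center_iff] at h
  have := congrArg (fun x : NU n => x.1.1) (h (eS n (zc n (nbw 0))))
  simp only [NU_mul_fst, eS_fst] at this
  rw [P_b0a n, P_ab n h1, Nat.add_zero] at this
  exact zc_nbw_ne_ncw n h2 h1 h2 this.symm

lemma noncent_nbw (hn : 1 ≤ n) {i : ℕ} (h2 : i + 1 ≤ n) :
    eS n (zc n (nbw i)) ∉ Set.center (NU n) := by
  intro h
  rw [Semigroup.mem_center_iff] at h
  have := congrArg (fun x : NU n => x.1.1) (h (eS n (zc n (apow 1))))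
  simp only [NU_mul_fst, eS_fst] at this
  rw [P_ab n (le_refl 1)] at this
  rcases Nat.eq_zero_or_pos i with h0 | h0
  · subst h0
    rw [P_b0a n] at this
    exact zc_nbw_ne_ncw n (i := 1) (j := 1) hn (le_refl 1) hn (by simpa using this)
  · rw [P_ba n h0 (le_refl 1)] at this
    exact zc_nbw_ne_zero n (i := 1 + i) (by omega) this

lemma noncent_ncw (hn : 1 ≤ n) {j : ℕ} (h1 : 1 ≤ j) (h2 : j + 1 ≤ n) :
    eS n (zc n (ncw j)) ∉ Set.center (NU n) := by
  intro h
  rw [Semigroup.mem_center_iff] at h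
  have := congrArg (fun x : NU n => x.1.1) (h (eS n (zc n (apow 1))))
  simp only [NU_mul_fst, eS_fst] at this
  rw [P_ac n (le_refl 1) h1, P_ca n h1 (le_refl 1)] at this
  exact zc_ncw_ne_zero n (j := j + 1) (by omega) (by omega) this.symm

/-- Classification of the non-central elements of the null union. -/
lemma vertexClassify (hn : 1 ≤ n) (x : NU n) (hx : x ∉ Set.center (NU n)) :
    (∃ i, 1 ≤ i ∧ i ≤ n ∧ x = eS n (zc n (apow i))) ∨
    (∃ i, i + 1 ≤ n ∧ x = eS n (zc n (nbw i))) ∨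
    (∃ j, 1 ≤ j ∧ j + 1 ≤ n ∧ x = eS n (zc n (ncw j))) ∨
    x = eT n (z1 ga1) ∨ x = eT n (z1 gb1) := by
  obtain ⟨⟨s, t⟩, hst⟩ := x
  rcases hst with h | h
  · -- s = 0, 'x = eT t'
    have hx' : (⟨(s, t), Or.inl h⟩ : NU n) = eT n t := NU_ext n h rfl
    rw [hx'] at hx ⊢
    rcases s1Classify t with h1 | h1 | h1 | h1 | h1 <;> subst h1
    · exact absurd (by rw [eT_zero]; exact central_zeroNU n) hx
    · exact Or.inr (Or.inr (Or.inr (Or.inl rfl)))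
    · exact Or.inr (Or.inr (Or.inr (Or.inr rfl)))
    · exact absurd (central_eT n ann_ab) hx
    · exact absurd (central_eT n ann_ba) hx
  · -- t = 0, 'x = eS s'
    have hx' : (⟨(s, t), Or.inr h⟩ : NU n) = eS n s := NU_ext n rfl h
    rw [hx'] at hx ⊢
    rcases snClassify n hn s with h1 | ⟨i, hi1, hi2, h1⟩ | ⟨i, hi2, h1⟩ |
        ⟨j, hj1, hj2, h1⟩ <;> subst h1
    · exact absurd (by rw [eS_zero]; exact central_zeroNU n) hx
    · exact Or.inl ⟨i, hi1, hi2, rfl⟩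
    · rcases Nat.lt_or_ge i n with h2 | h2
      · exact Or.inr (Or.inl ⟨i, by omega, rfl⟩)
      · have hin : i = n := by omega
        rw [hin] at hx
        exact absurd (central_eS n (ann_bn n hn)) hx
    · rcases Nat.lt_or_ge j n with h2 | h2
      · exact Or.inr (Or.inr (Or.inl ⟨j, hj1, by omega, rfl⟩))
      · have hjn : j = n := by omega
        rw [hjn] at hx
        exact absurd (central_eS n (ann_cn n hn)) hx

/-- The code of an element of the null union. -/
def code (x : NU n) : Tg × Tg1 := (evS n x.1.1, ev1 x.1.2)

lemma code_eS_apow {i : ℕ} (h1 : 1 ≤ i) (h2 : i ≤ n) :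
    code n (eS n (zc n (apow i))) = (Tg.A i, Tg1.zero) := by
  unfold code
  rw [eS_fst, eS_snd, evS_apow n h1 h2, ev1_zero]

lemma code_eS_nbw {i : ℕ} (h2 : i ≤ n) :
    code n (eS n (zc n (nbw i))) = (Tg.AB i, Tg1.zero) := by
  unfold code
  rw [eS_fst, eS_snd, evS_nbw n h2, ev1_zero]

lemma code_eS_ncw {j : ℕ} (h1 : 1 ≤ j) (h2 : j ≤ n) :
    code n (eS n (zc n (ncw j))) = (Tg.BA j, Tg1.zero) := by
  unfold code
  rw [eS_fst, eS_snd, evS_ncw n h1 h2, ev1_zero]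

lemma code_eT_a : code n (eT n (z1 ga1)) = (Tg.zero, Tg1.a) := by
  unfold code
  rw [eT_fst, eT_snd, evS_zero, ev1_a]

lemma code_eT_b : code n (eT n (z1 gb1)) = (Tg.zero, Tg1.b) := by
  unfold code
  rw [eT_fst, eT_snd, evS_zero, ev1_b]

-- non-commuting facts
lemma nocomm_ab : eT n (z1 ga1) * eT n (z1 gb1) ≠ eT n (z1 gb1) * eT n (z1 ga1) := by
  intro h
  have := congrArg (fun x : NU n => x.1.2) h
  simp only [NU_mul_snd, eT_snd] at this
  rw [Q_ab, Q_ba] at this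
  exact z1_ab_ne_ba this

lemma comm_apow_nbw (hn : 1 ≤ n) {i j : ℕ} (hi1 : 1 ≤ i) (hi2 : i ≤ n) (hj2 : j + 1 ≤ n)
    (h : eS n (zc n (apow i)) * eS n (zc n (nbw j)) =
      eS n (zc n (nbw j)) * eS n (zc n (apow i))) :
    1 ≤ j ∧ n + 1 ≤ i + j := by
  have hfst := congrArg (fun x : NU n => x.1.1) h
  simp only [NU_mul_fst, eS_fst] at hfst
  rw [P_ab n hi1] at hfst
  rcases Nat.eq_zero_or_pos j with h0 | h0
  · subst h0
    rw [P_b0a n, Nat.add_zero] at hfst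
    exact absurd hfst (zc_nbw_ne_ncw n hi2 hi1 hi2)
  · refine ⟨h0, ?_⟩
    by_contra hc
    rw [P_ba n h0 hi1] at hfst
    exact zc_nbw_ne_zero n (i := i + j) (by omega) hfst

lemma comm_apow_ncw (hn : 1 ≤ n) {i j : ℕ} (hi1 : 1 ≤ i) (hj1 : 1 ≤ j) (hj2 : j + 1 ≤ n)
    (h : eS n (zc n (apow i)) * eS n (zc n (ncw j)) =
      eS n (zc n (ncw j)) * eS n (zc n (apow i))) :
    n + 1 ≤ i + j := by
  have hfst := congrArg (fun x : NU n => x.1.1) h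
  simp only [NU_mul_fst, eS_fst] at hfst
  rw [P_ac n hi1 hj1, P_ca n hj1 hi1] at hfst
  by_contra hc
  exact zc_ncw_ne_zero n (j := j + i) (by omega) (by omega) hfst.symm

end NUFacts


section Main

variable (n : ℕ)

/-- The vertex type of the commuting graph of the null union. -/
abbrev Vtx (n : ℕ) :=
  {x : NullUnion (Sn n) S1 // x ∉ Set.center (NullUnion (Sn n) S1)}

lemma code_inj (hn : 1 ≤ n) {x y : NU n} (hx : x ∉ Set.center (NU n))
    (hy : y ∉ Set.center (NU n)) (h : code n x = code n y) : x = y := by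
  rcases vertexClassify n hn x hx with ⟨i, hi1, hi2, rfl⟩ | ⟨i, hi2, rfl⟩ |
      ⟨j, hj1, hj2, rfl⟩ | rfl | rfl
  · rw [code_eS_apow n hi1 hi2] at h
    rcases vertexClassify n hn y hy with ⟨i', hi1', hi2', rfl⟩ | ⟨i', hi2', rfl⟩ |
        ⟨j', hj1', hj2', rfl⟩ | rfl | rfl
    · rw [code_eS_apow n hi1' hi2'] at h
      simp only [Prod.mk.injEq, Tg.A.injEq] at h
      rw [h.1]
    · rw [code_eS_nbw n (by omega)] at h
      simp at h
    · rw [code_eS_ncw n hj1' (by omega)] at h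
      simp at h
    · rw [code_eT_a n] at h
      simp at h
    · rw [code_eT_b n] at h
      simp at h
  · rw [code_eS_nbw n (by omega)] at h
    rcases vertexClassify n hn y hy with ⟨i', hi1', hi2', rfl⟩ | ⟨i', hi2', rfl⟩ |
        ⟨j', hj1', hj2', rfl⟩ | rfl | rfl
    · rw [code_eS_apow n hi1' hi2'] at h
      simp at h
    · rw [code_eS_nbw n (by omega)] at h
      simp only [Prod.mk.injEq, Tg.AB.injEq] at h
      rw [h.1]
    · rw [code_eS_ncw n hj1' (by omega)] at h
      simp at h
    · rw [code_eT_a n] at h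
      simp at h
    · rw [code_eT_b n] at h
      simp at h
  · rw [code_eS_ncw n hj1 (by omega)] at h
    rcases vertexClassify n hn y hy with ⟨i', hi1', hi2', rfl⟩ | ⟨i', hi2', rfl⟩ |
        ⟨j', hj1', hj2', rfl⟩ | rfl | rfl
    · rw [code_eS_apow n hi1' hi2'] at h
      simp at h
    · rw [code_eS_nbw n (by omega)] at h
      simp at h
    · rw [code_eS_ncw n hj1' (by omega)] at h
      simp only [Prod.mk.injEq, Tg.BA.injEq] at h
      rw [h.1]
    · rw [code_eT_a n] at h
      simp at h
    · rw [code_eT_b n] at h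
      simp at h
  · rw [code_eT_a n] at h
    rcases vertexClassify n hn y hy with ⟨i', hi1', hi2', rfl⟩ | ⟨i', hi2', rfl⟩ |
        ⟨j', hj1', hj2', rfl⟩ | rfl | rfl
    · rw [code_eS_apow n hi1' hi2'] at h
      simp at h
    · rw [code_eS_nbw n (by omega)] at h
      simp at h
    · rw [code_eS_ncw n hj1' (by omega)] at h
      simp at h
    · rfl
    · rw [code_eT_b n] at h
      simp at h
  · rw [code_eT_b n] at h
    rcases vertexClassify n hn y hy with ⟨i', hi1', hi2', rfl⟩ | ⟨i', hi2', rfl⟩ |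
        ⟨j', hj1', hj2', rfl⟩ | rfl | rfl
    · rw [code_eS_apow n hi1' hi2'] at h
      simp at h
    · rw [code_eS_nbw n (by omega)] at h
      simp at h
    · rw [code_eS_ncw n hj1' (by omega)] at h
      simp at h
    · rw [code_eT_a n] at h
      simp at h
    · rfl

/-- The vertices of the big clique. -/
def Fdef (hn : 1 ≤ n) (k : ℕ) : Vtx n :=
  if h : k < n then ⟨eS n (zc n (nbw k)), noncent_nbw n hn (by omega)⟩
  else if h2 : k < 2 * n - 1 then
    ⟨eS n (zc n (ncw (k - n + 1))), noncent_ncw n hn (by omega) (by omega)⟩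
  else ⟨eT n (z1 ga1), noncent_a n⟩

lemma Fdef_val (hn : 1 ≤ n) (k : ℕ) : (Fdef n hn k).1 =
    if k < n then eS n (zc n (nbw k))
    else if k < 2 * n - 1 then eS n (zc n (ncw (k - n + 1)))
    else eT n (z1 ga1) := by
  unfold Fdef
  split_ifs <;> rfl

lemma clique_exists (hn : 1 ≤ n) :
    ∃ s : Finset (Vtx n),
      (CommutingGraph (NullUnion (Sn n) S1)).IsNClique (2 * n) s := by
  classical
  let F : ℕ → Vtx n := Fdef n hn
  have hFval : ∀ k, (F k).1 =
      if k < n then eS n (zc n (nbw k))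
      else if k < 2 * n - 1 then eS n (zc n (ncw (k - n + 1)))
      else eT n (z1 ga1) := Fdef_val n hn
  have hFcode : ∀ k, code n (F k).1 =
      if k < n then (Tg.AB k, Tg1.zero)
      else if k < 2 * n - 1 then (Tg.BA (k - n + 1), Tg1.zero)
      else (Tg.zero, Tg1.a) := by
    intro k
    rw [hFval k]
    split_ifs with h h2
    · exact code_eS_nbw n (by omega)
    · exact code_eS_ncw n (by omega) (by omega)
    · exact code_eT_a n
  have hββ : ∀ k l, eS n (zc n (nbw k)) * eS n (zc n (nbw l)) = 0 := fun k l => by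
    rw [eS_mul, P_bb n, eS_zero]
  have hβγ : ∀ k l, eS n (zc n (nbw k)) * eS n (zc n (ncw l)) = 0 := fun k l => by
    rw [eS_mul, P_bc n, eS_zero]
  have hγβ : ∀ k l, 1 ≤ k → eS n (zc n (ncw k)) * eS n (zc n (nbw l)) = 0 := fun k l hk => by
    rw [eS_mul, P_cb n hk, eS_zero]
  have hγγ : ∀ k l, 1 ≤ k → 1 ≤ l → eS n (zc n (ncw k)) * eS n (zc n (ncw l)) = 0 :=
    fun k l hk hl => by rw [eS_mul, P_cc n hk, eS_zero]
  have hFcomm : ∀ k l, (F k).1 * (F l).1 = (F l).1 * (F k).1 := by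
    intro k l
    rw [hFval k, hFval l]
    split_ifs <;>
      first
        | rfl
        | (rw [hββ, hββ])
        | (rw [hβγ, hγβ _ _ (by omega)])
        | (rw [hγβ _ _ (by omega), hβγ])
        | (rw [hγγ _ _ (by omega) (by omega), hγγ _ _ (by omega) (by omega)])
        | (rw [eS_mul_eT, eT_mul_eS])
        | (rw [eT_mul_eS, eS_mul_eT])
  refine ⟨(Finset.range (2 * n)).image F, ?_, ?_⟩
  · intro x hx y hy hne
    simp only [Finset.coe_image, Set.mem_image] at hx hy
    obtain ⟨k, _, rfl⟩ := hx
    obtain ⟨l, _, rfl⟩ := hy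
    exact (show (F k) ≠ (F l) ∧ ((F k).1 * (F l).1 = (F l).1 * (F k).1) from ⟨hne, hFcomm k l⟩)
  · rw [Finset.card_image_of_injOn, Finset.card_range]
    intro k hk l hl h
    simp only [Finset.coe_range, Set.mem_Iio] at hk hl
    have h2 : code n (F k).1 = code n (F l).1 := by rw [h]
    rw [hFcode k, hFcode l] at h2
    split_ifs at h2 <;>
      first
        | omega
        | (obtain ⟨e1, e2⟩ := Prod.ext_iff.mp h2
           first
             | (injection e1 with e1; omega)
             | (injection e1)
             | (injection e2))

lemma clique_bound (hn : 1 ≤ n) (k : ℕ) (s : Finset (Vtx n))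
    (hs : (CommutingGraph (NullUnion (Sn n) S1)).IsNClique k s) : k ≤ 2 * n := by
  classical
  have hcomm : ∀ v ∈ s, ∀ w ∈ s, (v : Vtx n).1 ≠ (w : Vtx n).1 →
      (v : Vtx n).1 * (w : Vtx n).1 = (w : Vtx n).1 * (v : Vtx n).1 := by
    intro v hv w hw hne
    exact And.right (hs.1 (Finset.mem_coe.mpr hv) (Finset.mem_coe.mpr hw)
      (fun hh => hne (congrArg Subtype.val hh)))
  have hinj : Set.InjOn (fun v : Vtx n => code n v.1) ↑s := fun v _ w _ h =>
    Subtype.ext (code_inj n hn v.2 w.2 h)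
  have hkcard : k = (s.image (fun v : Vtx n => code n v.1)).card := by
    rw [Finset.card_image_of_injOn hinj, hs.2]
  set T := s.image (fun v : Vtx n => code n v.1) with hT
  set sT : Finset (Tg × Tg1) :=
    if ∃ v ∈ s, (v : Vtx n).1 = eT n (z1 ga1) then {(Tg.zero, Tg1.a)}
    else {(Tg.zero, Tg1.b)} with hsT
  have hsTcard : sT.card = 1 := by
    rw [hsT]; split_ifs <;> rfl
  have hsTa : ∀ v ∈ s, (v : Vtx n).1 = eT n (z1 ga1) → (Tg.zero, Tg1.a) ∈ sT := by
    intro v hv h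
    rw [hsT, if_pos ⟨v, hv, h⟩]
    exact Finset.mem_singleton_self _
  have hsTb : ∀ v ∈ s, (v : Vtx n).1 = eT n (z1 gb1) → (Tg.zero, Tg1.b) ∈ sT := by
    intro v hv h
    have hno : ¬ ∃ w ∈ s, (w : Vtx n).1 = eT n (z1 ga1) := by
      rintro ⟨w, hw, hwa⟩
      have hne : (w : Vtx n).1 ≠ (v : Vtx n).1 := by
        rw [hwa, h]
        intro hh
        have := congrArg (fun x : NU n => ev1 x.1.2) hh
        simp only [eT_snd] at this
        rw [ev1_a, ev1_b] at this
        exact Tg1.noConfusion this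
      have := hcomm w hw v hv hne
      rw [hwa, h] at this
      exact nocomm_ab n this
    rw [hsT, if_neg hno]
    exact Finset.mem_singleton_self _
  by_cases hA : ∃ i, 1 ≤ i ∧ i ≤ n ∧ ∃ v ∈ s, (v : Vtx n).1 = eS n (zc n (apow i))
  · haveI : DecidablePred fun i =>
        1 ≤ i ∧ i ≤ n ∧ ∃ v ∈ s, (v : Vtx n).1 = eS n (zc n (apow i)) :=
      fun _ => Classical.propDecidable _
    set m := Nat.find hA with hm
    obtain ⟨hm1, hm2, vA, hvA, hvAe⟩ := Nat.find_spec hA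
    have hmin : ∀ i, (1 ≤ i ∧ i ≤ n ∧ ∃ v ∈ s, (v : Vtx n).1 = eS n (zc n (apow i))) →
        m ≤ i := fun i h => Nat.find_min' hA h
    set S : Finset (Tg × Tg1) :=
      ((Finset.Icc m n).image fun i => (Tg.A i, Tg1.zero)) ∪
      ((Finset.Icc (n + 1 - m) (n - 1)).image fun i => (Tg.AB i, Tg1.zero)) ∪
      ((Finset.Icc (n + 1 - m) (n - 1)).image fun j => (Tg.BA j, Tg1.zero)) ∪ sT with hS
    have hsub : T ⊆ S := by
      intro p hp
      rw [hT] at hp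
      obtain ⟨v, hv, rfl⟩ := Finset.mem_image.mp hp
      rcases vertexClassify n hn (v : Vtx n).1 v.2 with ⟨i, hi1, hi2, he⟩ | ⟨i, hi2, he⟩ |
          ⟨j, hj1, hj2, he⟩ | he | he
      · rw [he, code_eS_apow n hi1 hi2, hS]
        have := hmin i ⟨hi1, hi2, v, hv, he⟩
        refine Finset.mem_union_left _ (Finset.mem_union_left _ (Finset.mem_union_left _ ?_))
        exact Finset.mem_image.mpr ⟨i, Finset.mem_Icc.mpr ⟨this, hi2⟩, rfl⟩
      · have hne : (v : Vtx n).1 ≠ (vA : Vtx n).1 := by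
          rw [he, hvAe]
          intro hh
          have := congrArg (fun x : NU n => evS n x.1.1) hh
          simp only [eS_fst] at this
          rw [evS_nbw n (by omega), evS_apow n hm1 hm2] at this
          exact Tg.noConfusion this
        have hcm := hcomm vA hvA v hv (fun hh => hne hh.symm)
        rw [he, hvAe] at hcm
        obtain ⟨hj1, hsum⟩ := comm_apow_nbw n hn hm1 hm2 hi2 hcm
        rw [he, code_eS_nbw n (by omega), hS]
        refine Finset.mem_union_left _ (Finset.mem_union_left _ (Finset.mem_union_right _ ?_))
        exact Finset.mem_image.mpr ⟨i, Finset.mem_Icc.mpr ⟨by omega, by omega⟩, rfl⟩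
      · have hne : (v : Vtx n).1 ≠ (vA : Vtx n).1 := by
          rw [he, hvAe]
          intro hh
          have := congrArg (fun x : NU n => evS n x.1.1) hh
          simp only [eS_fst] at this
          rw [evS_ncw n hj1 (by omega), evS_apow n hm1 hm2] at this
          exact Tg.noConfusion this
        have hcm := hcomm vA hvA v hv (fun hh => hne hh.symm)
        rw [he, hvAe] at hcm
        have hsum := comm_apow_ncw n hn hm1 hj1 hj2 hcm
        rw [he, code_eS_ncw n hj1 (by omega), hS]
        refine Finset.mem_union_left _ (Finset.mem_union_right _ ?_)
        exact Finset.mem_image.mpr ⟨j, Finset.mem_Icc.mpr ⟨by omega, by omega⟩, rfl⟩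
      · rw [he, code_eT_a n, hS]
        exact Finset.mem_union_right _ (hsTa v hv he)
      · rw [he, code_eT_b n, hS]
        exact Finset.mem_union_right _ (hsTb v hv he)
    have hcardS : S.card ≤ 2 * n := by
      rw [hS]
      apply le_trans (Finset.card_union_le _ _)
      apply le_trans (Nat.add_le_add (Finset.card_union_le _ _) le_rfl)
      apply le_trans (Nat.add_le_add (Nat.add_le_add (Finset.card_union_le _ _) le_rfl) le_rfl)
      apply le_trans (Nat.add_le_add (Nat.add_le_add (Nat.add_le_add
        Finset.card_image_le Finset.card_image_le) Finset.card_image_le) le_rfl)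
      rw [hsTcard]; simp only [Nat.card_Icc]
      omega
    rw [hkcard]
    exact le_trans (Finset.card_le_card hsub) hcardS
  · set S : Finset (Tg × Tg1) :=
      ((Finset.Icc 0 (n - 1)).image fun i => (Tg.AB i, Tg1.zero)) ∪
      ((Finset.Icc 1 (n - 1)).image fun j => (Tg.BA j, Tg1.zero)) ∪ sT with hS
    have hsub : T ⊆ S := by
      intro p hp
      rw [hT] at hp
      obtain ⟨v, hv, rfl⟩ := Finset.mem_image.mp hp
      rcases vertexClassify n hn (v : Vtx n).1 v.2 with ⟨i, hi1, hi2, he⟩ | ⟨i, hi2, he⟩ |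
          ⟨j, hj1, hj2, he⟩ | he | he
      · exact absurd ⟨i, hi1, hi2, v, hv, he⟩ hA
      · rw [he, code_eS_nbw n (by omega), hS]
        refine Finset.mem_union_left _ (Finset.mem_union_left _ ?_)
        exact Finset.mem_image.mpr ⟨i, Finset.mem_Icc.mpr ⟨by omega, by omega⟩, rfl⟩
      · rw [he, code_eS_ncw n hj1 (by omega), hS]
        refine Finset.mem_union_left _ (Finset.mem_union_right _ ?_)
        exact Finset.mem_image.mpr ⟨j, Finset.mem_Icc.mpr ⟨by omega, by omega⟩, rfl⟩
      · rw [he, code_eT_a n, hS]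
        exact Finset.mem_union_right _ (hsTa v hv he)
      · rw [he, code_eT_b n, hS]
        exact Finset.mem_union_right _ (hsTb v hv he)
    have hcardS : S.card ≤ 2 * n := by
      rw [hS]
      apply le_trans (Finset.card_union_le _ _)
      apply le_trans (Nat.add_le_add (Finset.card_union_le _ _) le_rfl)
      apply le_trans (Nat.add_le_add (Nat.add_le_add
        Finset.card_image_le Finset.card_image_le) le_rfl)
      rw [hsTcard]; simp only [Nat.card_Icc]
      omega
    rw [hkcard]
    exact le_trans (Finset.card_le_card hsub) hcardS

end Main

theorem nullUnion_Sn_S1_cliqueNum_and_rank (n : ℕ) (hn : 1 ≤ n) :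
    (CommutingGraph (NullUnion (Sn n) S1)).cliqueNum = 2 * n ∧
    ∃ gens : Finset (NullUnion (Sn n) S1),
      gens.card = 4 ∧
      Subsemigroup.closure (gens : Set (NullUnion (Sn n) S1)) = ⊤ := by
  classical
  constructor
  · -- clique number
    have hmem : (2 * n) ∈ {k | ∃ s, (CommutingGraph (NullUnion (Sn n) S1)).IsNClique k s} :=
      clique_exists n hn
    have hub : ∀ k ∈ {k | ∃ s, (CommutingGraph (NullUnion (Sn n) S1)).IsNClique k s},
        k ≤ 2 * n := by
      rintro k ⟨s, hs⟩
      exact clique_bound n hn k s hs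
    unfold SimpleGraph.cliqueNum
    exact le_antisymm (csSup_le ⟨2 * n, hmem⟩ hub) (le_csSup ⟨2 * n, hub⟩ hmem)
  · -- generation by 4 elements
    set g1 : NullUnion (Sn n) S1 := eS n (zc n ga) with hg1
    set g2 : NullUnion (Sn n) S1 := eS n (zc n gb) with hg2
    set g3 : NullUnion (Sn n) S1 := eT n (z1 ga1) with hg3
    set g4 : NullUnion (Sn n) S1 := eT n (z1 gb1) with hg4
    have c1 : code n g1 = (Tg.A 1, Tg1.zero) := code_eS_apow n (le_refl 1) hn
    have c2 : code n g2 = (Tg.AB 0, Tg1.zero) := code_eS_nbw n (Nat.zero_le n)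
    have c3 : code n g3 = (Tg.zero, Tg1.a) := code_eT_a n
    have c4 : code n g4 = (Tg.zero, Tg1.b) := code_eT_b n
    have hne : ∀ x y : NullUnion (Sn n) S1, code n x ≠ code n y → x ≠ y :=
      fun x y h hxy => h (by rw [hxy])
    have h12 : g1 ≠ g2 := hne _ _ (by rw [c1, c2]; simp)
    have h13 : g1 ≠ g3 := hne _ _ (by rw [c1, c3]; simp)
    have h14 : g1 ≠ g4 := hne _ _ (by rw [c1, c4]; simp)
    have h23 : g2 ≠ g3 := hne _ _ (by rw [c2, c3]; simp)
    have h24 : g2 ≠ g4 := hne _ _ (by rw [c2, c4]; simp)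
    have h34 : g3 ≠ g4 := hne _ _ (by rw [c3, c4]; simp)
    refine ⟨{g1, g2, g3, g4}, ?_, ?_⟩
    · rw [Finset.card_insert_of_notMem (by simp [h12, h13, h14]),
        Finset.card_insert_of_notMem (by simp [h23, h24]),
        Finset.card_insert_of_notMem (by simp [h34]), Finset.card_singleton]
    · rw [eq_top_iff]
      set C := Subsemigroup.closure
        (↑({g1, g2, g3, g4} : Finset (NullUnion (Sn n) S1)) :
          Set (NullUnion (Sn n) S1)) with hC
      have hgen1 : ∀ u : FreeSemigroup Bool, eS n (zc n u) ∈ C := by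
        intro u
        induction u using FreeSemigroup.recOnMul with
        | ih1 x =>
          cases x
          · show eS n (zc n ga) ∈ C
            exact Subsemigroup.subset_closure (by simp [hg1])
          · show eS n (zc n gb) ∈ C
            exact Subsemigroup.subset_closure (by simp [hg2])
        | ih2 u v hu hv =>
          rw [zc_mul n, ← eS_mul n]
          exact Subsemigroup.mul_mem _ hu hv
      have hgen2 : ∀ u : FreeSemigroup Bool, eT n (z1 u) ∈ C := by
        intro u
        induction u using FreeSemigroup.recOnMul with
        | ih1 x =>
          cases x
          · show eT n (z1 ga1) ∈ C
            exact Subsemigroup.subset_closure (by simp [hg3])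
          · show eT n (z1 gb1) ∈ C
            exact Subsemigroup.subset_closure (by simp [hg4])
        | ih2 u v hu hv =>
          rw [z1_mul, ← eT_mul n]
          exact Subsemigroup.mul_mem _ hu hv
      have h0 : (0 : NullUnion (Sn n) S1) ∈ C := by
        have := hgen1 (gb * gb)
        rwa [zr2 n, eS_zero n] at this
      rintro ⟨⟨x1, x2⟩, hor⟩ -
      rcases hor with h | h
      · have hx : (⟨(x1, x2), Or.inl h⟩ : NullUnion (Sn n) S1) = eT n x2 := NU_ext n h rfl
        rw [hx]
        induction x2 using Con.induction_on with
        | H w =>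
          rcases w with _ | u
          · show eT n (s1mk 0) ∈ C
            rw [s1mk_zero, eT_zero]
            exact h0
          · exact hgen2 u
      · have hx : (⟨(x1, x2), Or.inr h⟩ : NullUnion (Sn n) S1) = eS n x1 := NU_ext n rfl h
        rw [hx]
        induction x1 using Con.induction_on with
        | H w =>
          rcases w with _ | u
          · show eS n (smk n 0) ∈ C
            rw [smk_zero, eS_zero]
            exact h0
          · exact hgen1 u
end

section
/- The semigroup S = ⟨x₁, x₂, x₃, x₄ | xᵢxⱼxₖ = 0 ∀i,j,k; x₁² = x₄x₁; x₄² = x₁x₄; x₁x₂ = x₄x₂ = x₁x₃ = x₄x₃ = x₂x₁ = x₂x₃ = x₃x₂ = x₃x₄ = 0⟩ has commuting graph isomorphic to the path graph on the four vertices x₁ − x₂ − x₃ − x₄, and x₁ − x₂ − x₃ − x₄ is a left path of length 3 in Γ(S). -/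
/-- The free semigroup with zero on the four generators `x₁, x₂, x₃, x₄`. -/
abbrev W4 := WithZero (FreeSemigroup (Fin 4))

/-- The generator `xᵢ` (indexed from `0`, so `xv 0 = x₁`, …, `xv 3 = x₄`). -/
def xv (i : Fin 4) : FreeSemigroup (Fin 4) := FreeSemigroup.of i

/-- The defining relations: `xᵢxⱼxₖ = 0` for all `i,j,k`; `x₁² = x₄x₁`;
`x₄² = x₁x₄`; `x₁x₂ = x₄x₂ = x₁x₃ = x₄x₃ = x₂x₁ = x₂x₃ = x₃x₂ = x₃x₄ = 0`. -/
def KnitRel : W4 → W4 → Prop := fun p q =>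
  (∃ i j k : Fin 4, p = ((xv i * xv j * xv k : FreeSemigroup (Fin 4)) : W4) ∧ q = 0) ∨
  (p = ((xv 0 * xv 0 : FreeSemigroup (Fin 4)) : W4) ∧
    q = ((xv 3 * xv 0 : FreeSemigroup (Fin 4)) : W4)) ∨
  (p = ((xv 3 * xv 3 : FreeSemigroup (Fin 4)) : W4) ∧
    q = ((xv 0 * xv 3 : FreeSemigroup (Fin 4)) : W4)) ∨
  (q = 0 ∧
    (p = ((xv 0 * xv 1 : FreeSemigroup (Fin 4)) : W4) ∨
     p = ((xv 3 * xv 1 : FreeSemigroup (Fin 4)) : W4) ∨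
     p = ((xv 0 * xv 2 : FreeSemigroup (Fin 4)) : W4) ∨
     p = ((xv 3 * xv 2 : FreeSemigroup (Fin 4)) : W4) ∨
     p = ((xv 1 * xv 0 : FreeSemigroup (Fin 4)) : W4) ∨
     p = ((xv 1 * xv 2 : FreeSemigroup (Fin 4)) : W4) ∨
     p = ((xv 2 * xv 1 : FreeSemigroup (Fin 4)) : W4) ∨
     p = ((xv 2 * xv 3 : FreeSemigroup (Fin 4)) : W4)))

/-- The congruence generated by the knit relations. -/
def KnitCon : Con W4 := conGen KnitRel

/-- The knit-degree-3 example semigroup. -/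
def KnitS : Type := KnitCon.Quotient

instance : Semigroup KnitS := Con.semigroup _

/-- The image of the generator `xᵢ` in the semigroup (`e 0 = x₁`, …, `e 3 = x₄`). -/
def e (i : Fin 4) : KnitS := ((xv i : W4) : KnitCon.Quotient)

/-- `a : Fin (m+1) → S` is a left path of length `m`: consecutive entries are
distinct and commute, no entry is central, `a 0 ≠ a m`, and
`a 0 * a i = a m * a i` for all `i`. -/
def IsLeftPath (S : Type*) [Semigroup S] (m : ℕ) (a : Fin (m + 1) → S) : Prop :=
  1 ≤ m ∧
  (∀ i, a i ∉ Set.center S) ∧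
  (∀ i : Fin m, a i.castSucc ≠ a i.succ ∧
    a i.castSucc * a i.succ = a i.succ * a i.castSucc) ∧
  a 0 ≠ a (Fin.last m) ∧
  (∀ i, a 0 * a i = a (Fin.last m) * a i)

/-! ### Auxiliary model semigroup -/

inductive T where
  | z | g0 | g1 | g2 | g3 | p00 | p03 | p11 | p22 | p13 | p20
  deriving DecidableEq

instance : Fintype T where
  elems := {.z, .g0, .g1, .g2, .g3, .p00, .p03, .p11, .p22, .p13, .p20}
  complete := fun x => by cases x <;> decide

def T.mul : T → T → T
  | .g0, .g0 => .p00
  | .g0, .g3 => .p03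
  | .g1, .g1 => .p11
  | .g1, .g3 => .p13
  | .g2, .g0 => .p20
  | .g2, .g2 => .p22
  | .g3, .g0 => .p00
  | .g3, .g3 => .p03
  | _, _ => .z

instance : Semigroup T where
  mul := T.mul
  mul_assoc := by decide

def gfun (i : Fin 4) : T :=
  match i with
  | ⟨0,_⟩ => .g0 | ⟨1,_⟩ => .g1 | ⟨2,_⟩ => .g2 | ⟨3,_⟩ => .g3

def ψf : FreeSemigroup (Fin 4) →ₙ* T := FreeSemigroup.lift gfun

open Classical in
noncomputable def ψ : W4 → T := fun w => if h : w = 0 then T.z else ψf (WithZero.unzero h)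

@[simp] lemma ψ_zero : ψ (0 : W4) = T.z := by simp [ψ]

@[simp] lemma ψ_coe (a : FreeSemigroup (Fin 4)) : ψ (a : W4) = ψf a := by
  rw [ψ, dif_neg (WithZero.coe_ne_zero)]
  simp

lemma ψ_mul (x y : W4) : ψ (x * y) = ψ x * ψ y := by
  induction x using WithZero.recZeroCoe with
  | zero => simp [zero_mul]; cases (ψ y) <;> rfl
  | coe a =>
    induction y using WithZero.recZeroCoe with
    | zero => simp [mul_zero]; cases (ψf a) <;> rfl
    | coe b => rw [← WithZero.coe_mul, ψ_coe, map_mul, ψ_coe, ψ_coe]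

lemma base : ∀ x y, KnitRel x y → (Con.ker (⟨ψ, ψ_mul⟩ : W4 →ₙ* T)) x y := by
  have tripleT : ∀ i j k : Fin 4, gfun i * gfun j * gfun k = T.z := by decide
  intro x y h
  rcases h with ⟨i, j, k, rfl, rfl⟩ | ⟨rfl, rfl⟩ | ⟨rfl, rfl⟩ |
    ⟨rfl, rfl | rfl | rfl | rfl | rfl | rfl | rfl | rfl⟩ <;>
    rw [Con.ker_rel, MulHom.coe_mk] <;>
    simp only [ψ_coe, ψ_zero, map_mul, xv, FreeSemigroup.lift_of, ψf]
  · exact tripleT i j k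
  all_goals decide

lemma hker : KnitCon ≤ Con.ker (⟨ψ, ψ_mul⟩ : W4 →ₙ* T) := Con.conGen_le.2 base

noncomputable def θ : KnitS → T := fun x => Con.liftOn x ψ (fun _ _ h => hker h)

@[simp] lemma θ_mk (w : W4) : θ ((w : KnitCon.Quotient) : KnitS) = ψ w := rfl

lemma ne_of_θ {x y : KnitS} (h : θ x ≠ θ y) : x ≠ y := fun hxy => h (congrArg θ hxy)

/-! ### Basic computations in KnitS -/

def z0 : KnitS := ((0 : W4) : KnitCon.Quotient)

lemma rel {a b : W4} (h : KnitRel a b) :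
    ((a : KnitCon.Quotient) : KnitS) = ((b : KnitCon.Quotient) : KnitS) :=
  (Con.eq _).mpr (ConGen.Rel.of a b h)

lemma e_mul (i j : Fin 4) :
    e i * e j = (((xv i * xv j : FreeSemigroup (Fin 4)) : W4) : KnitCon.Quotient) := by
  show ((xv i : W4) : KnitCon.Quotient) * ((xv j : W4) : KnitCon.Quotient) = _
  rw [← Con.coe_mul, WithZero.coe_mul]

@[simp] lemma θ_e (i : Fin 4) : θ (e i) = gfun i := by
  refine (θ_mk _).trans ?_
  simp [xv, ψf]

@[simp] lemma θ_ee (i j : Fin 4) : θ (e i * e j) = gfun i * gfun j := by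
  rw [e_mul]
  refine (θ_mk _).trans ?_
  simp [ψ_mul, xv, ψf]

@[simp] lemma θ_z0 : θ z0 = T.z := by refine (θ_mk _).trans ?_; simp

@[simp] lemma z0_mul (x : KnitS) : z0 * x = z0 := by
  induction x using Con.induction_on with
  | H w => show ((0 : W4) : KnitCon.Quotient) * _ = _; rw [← Con.coe_mul, zero_mul]; rfl

@[simp] lemma mul_z0 (x : KnitS) : x * z0 = z0 := by
  induction x using Con.induction_on with
  | H w => show _ * ((0 : W4) : KnitCon.Quotient) = _; rw [← Con.coe_mul, mul_zero]; rfl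

@[simp] lemma triple (i j k : Fin 4) : e i * e j * e k = z0 := by
  rw [e_mul i j]
  show (((xv i * xv j : FreeSemigroup (Fin 4)) : W4) : KnitCon.Quotient) *
    ((xv k : W4) : KnitCon.Quotient) = _
  rw [← Con.coe_mul, WithZero.coe_mul]
  exact rel (Or.inl ⟨i, j, k, rfl, rfl⟩)

@[simp] lemma e01 : e 0 * e 1 = z0 := by
  rw [e_mul]; exact rel (Or.inr (Or.inr (Or.inr ⟨rfl, Or.inl rfl⟩)))
@[simp] lemma e31 : e 3 * e 1 = z0 := by
  rw [e_mul]; exact rel (Or.inr (Or.inr (Or.inr ⟨rfl, Or.inr (Or.inl rfl)⟩)))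
@[simp] lemma e02 : e 0 * e 2 = z0 := by
  rw [e_mul]; exact rel (Or.inr (Or.inr (Or.inr ⟨rfl, Or.inr (Or.inr (Or.inl rfl))⟩)))
@[simp] lemma e32 : e 3 * e 2 = z0 := by
  rw [e_mul]; exact rel (Or.inr (Or.inr (Or.inr ⟨rfl, Or.inr (Or.inr (Or.inr (Or.inl rfl)))⟩)))
@[simp] lemma e10 : e 1 * e 0 = z0 := by
  rw [e_mul]
  exact rel (Or.inr (Or.inr (Or.inr ⟨rfl, Or.inr (Or.inr (Or.inr (Or.inr (Or.inl rfl))))⟩)))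
@[simp] lemma e12 : e 1 * e 2 = z0 := by
  rw [e_mul]
  exact rel (Or.inr (Or.inr (Or.inr
    ⟨rfl, Or.inr (Or.inr (Or.inr (Or.inr (Or.inr (Or.inl rfl)))))⟩)))
@[simp] lemma e21 : e 2 * e 1 = z0 := by
  rw [e_mul]
  exact rel (Or.inr (Or.inr (Or.inr
    ⟨rfl, Or.inr (Or.inr (Or.inr (Or.inr (Or.inr (Or.inr (Or.inl rfl))))))⟩)))
@[simp] lemma e23 : e 2 * e 3 = z0 := by
  rw [e_mul]
  exact rel (Or.inr (Or.inr (Or.inr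
    ⟨rfl, Or.inr (Or.inr (Or.inr (Or.inr (Or.inr (Or.inr (Or.inr rfl))))))⟩)))

@[simp] lemma e30 : e 3 * e 0 = e 0 * e 0 := by
  rw [e_mul, e_mul]; exact (rel (Or.inr (Or.inl ⟨rfl, rfl⟩))).symm
@[simp] lemma e33 : e 3 * e 3 = e 0 * e 3 := by
  rw [e_mul 3 3, e_mul 0 3]; exact rel (Or.inr (Or.inr (Or.inl ⟨rfl, rfl⟩)))

/-! ### Classification of elements -/

def Canon (x : KnitS) : Prop :=
  x = z0 ∨ x = e 0 ∨ x = e 1 ∨ x = e 2 ∨ x = e 3 ∨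
  x = e 0 * e 0 ∨ x = e 0 * e 3 ∨ x = e 1 * e 1 ∨ x = e 2 * e 2 ∨
  x = e 1 * e 3 ∨ x = e 2 * e 0

lemma canon_mul {a b : KnitS} (ha : Canon a) (hb : Canon b) : Canon (a * b) := by
  unfold Canon at *
  rcases ha with rfl|rfl|rfl|rfl|rfl|rfl|rfl|rfl|rfl|rfl|rfl <;>
    rcases hb with rfl|rfl|rfl|rfl|rfl|rfl|rfl|rfl|rfl|rfl|rfl <;>
    simp only [← mul_assoc, triple, z0_mul, mul_z0, e01, e31, e02, e32, e10, e12, e21, e23,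
      e30, e33] <;>
    tauto

lemma classify (x : KnitS) : Canon x := by
  induction x using Con.induction_on with
  | H w =>
    induction w using WithZero.recZeroCoe with
    | zero => exact Or.inl rfl
    | coe a =>
      induction a using FreeSemigroup.recOnMul with
      | ih1 i =>
        have : ((((FreeSemigroup.of i) : FreeSemigroup (Fin 4)) : W4) : KnitCon.Quotient) = e i :=
          rfl
        rw [this]
        fin_cases i
        · exact Or.inr (Or.inl rfl)
        · exact Or.inr (Or.inr (Or.inl rfl))
        · exact Or.inr (Or.inr (Or.inr (Or.inl rfl)))
        · exact Or.inr (Or.inr (Or.inr (Or.inr (Or.inl rfl))))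
      | ih2 x y hx hy =>
        have : (((FreeSemigroup.of x * y : FreeSemigroup (Fin 4)) : W4) : KnitCon.Quotient) =
            (((FreeSemigroup.of x : FreeSemigroup (Fin 4)) : W4) : KnitCon.Quotient) *
            ((y : W4) : KnitCon.Quotient) := by
          rw [← Con.coe_mul, WithZero.coe_mul]
        rw [this]
        exact canon_mul hx hy

/-! ### Centrality -/

lemma central_z0 : z0 ∈ Set.center KnitS :=
  Semigroup.mem_center_iff.mpr fun g => by rw [mul_z0, z0_mul]

lemma central_pair (i j : Fin 4) : e i * e j ∈ Set.center KnitS := by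
  refine Semigroup.mem_center_iff.mpr fun g => ?_
  rcases classify g with rfl|rfl|rfl|rfl|rfl|rfl|rfl|rfl|rfl|rfl|rfl <;>
    simp only [← mul_assoc, triple, z0_mul, mul_z0]

lemma noncentral (i : Fin 4) : e i ∉ Set.center KnitS := by
  rw [Semigroup.mem_center_iff]
  intro h
  fin_cases i
  · exact ne_of_θ (x := e 2 * e 0) (y := e 0 * e 2) (by rw [θ_ee, θ_ee]; decide) (h (e 2))
  · exact ne_of_θ (x := e 3 * e 1) (y := e 1 * e 3) (by rw [θ_ee, θ_ee]; decide) (h (e 3))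
  · exact ne_of_θ (x := e 0 * e 2) (y := e 2 * e 0) (by rw [θ_ee, θ_ee]; decide) (h (e 0))
  · exact ne_of_θ (x := e 1 * e 3) (y := e 3 * e 1) (by rw [θ_ee, θ_ee]; decide) (h (e 1))

lemma e_ne {i j : Fin 4} (h : gfun i ≠ gfun j) : e i ≠ e j :=
  ne_of_θ (by simpa using h)

lemma gfun_inj : ∀ i j : Fin 4, gfun i = gfun j → i = j := by decide

lemma e_injective : Function.Injective e := fun i j h =>
  gfun_inj i j (by simpa using congrArg θ h)

/-! ### The graph isomorphism -/

noncomputable def fV : Fin 4 → {x : KnitS // x ∉ Set.center KnitS} :=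
  fun i => ⟨e i, noncentral i⟩

lemma fV_bij : Function.Bijective fV := by
  constructor
  · intro i j h
    exact e_injective (congrArg Subtype.val h)
  · rintro ⟨x, hx⟩
    rcases classify x with rfl|rfl|rfl|rfl|rfl|h|h|h|h|h|h
    · exact absurd central_z0 hx
    · exact ⟨0, rfl⟩
    · exact ⟨1, rfl⟩
    · exact ⟨2, rfl⟩
    · exact ⟨3, rfl⟩
    all_goals { subst h; exact absurd (central_pair _ _) hx }

theorem knit_commutingGraph_and_leftPath :
    Nonempty (CommutingGraph KnitS ≃g SimpleGraph.pathGraph 4) ∧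
    IsLeftPath KnitS 3 ![e 0, e 1, e 2, e 3] := by
  constructor
  · refine ⟨(SimpleGraph.Iso.symm ⟨Equiv.ofBijective fV fV_bij, ?_⟩)⟩
    intro a b
    show (fV a ≠ fV b ∧ (e a) * (e b) = (e b) * (e a)) ↔ _
    rw [SimpleGraph.pathGraph_adj]
    have hne : ∀ {i j : Fin 4}, gfun i ≠ gfun j → fV i ≠ fV j := fun h hf =>
      e_ne h (congrArg Subtype.val hf)
    fin_cases a <;> fin_cases b
    · exact iff_of_false (fun h => h.1 rfl) (by decide)
    · exact iff_of_true ⟨hne (by decide), by show e 0 * e 1 = e 1 * e 0; rw [e01, e10]⟩ (by decide)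
    · exact iff_of_false (fun h => ne_of_θ (x := e 0 * e 2) (y := e 2 * e 0)
        (by rw [θ_ee, θ_ee]; decide) h.2) (by decide)
    · exact iff_of_false (fun h => ne_of_θ (x := e 0 * e 3) (y := e 3 * e 0)
        (by rw [θ_ee, θ_ee]; decide) h.2) (by decide)
    · exact iff_of_true ⟨hne (by decide), by show e 1 * e 0 = e 0 * e 1; rw [e01, e10]⟩ (by decide)
    · exact iff_of_false (fun h => h.1 rfl) (by decide)
    · exact iff_of_true ⟨hne (by decide), by show e 1 * e 2 = e 2 * e 1; rw [e12, e21]⟩ (by decide)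
    · exact iff_of_false (fun h => ne_of_θ (x := e 1 * e 3) (y := e 3 * e 1)
        (by rw [θ_ee, θ_ee]; decide) h.2) (by decide)
    · exact iff_of_false (fun h => ne_of_θ (x := e 2 * e 0) (y := e 0 * e 2)
        (by rw [θ_ee, θ_ee]; decide) h.2) (by decide)
    · exact iff_of_true ⟨hne (by decide), by show e 2 * e 1 = e 1 * e 2; rw [e12, e21]⟩ (by decide)
    · exact iff_of_false (fun h => h.1 rfl) (by decide)
    · exact iff_of_true ⟨hne (by decide), by show e 2 * e 3 = e 3 * e 2; rw [e23, e32]⟩ (by decide)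
    · exact iff_of_false (fun h => ne_of_θ (x := e 3 * e 0) (y := e 0 * e 3)
        (by rw [θ_ee, θ_ee]; decide) h.2) (by decide)
    · exact iff_of_false (fun h => ne_of_θ (x := e 3 * e 1) (y := e 1 * e 3)
        (by rw [θ_ee, θ_ee]; decide) h.2) (by decide)
    · exact iff_of_true ⟨hne (by decide), by show e 3 * e 2 = e 2 * e 3; rw [e23, e32]⟩ (by decide)
    · exact iff_of_false (fun h => h.1 rfl) (by decide)
  · refine ⟨by norm_num, ?_, ?_, ?_, ?_⟩
    · intro i
      fin_cases i
      · exact noncentral 0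
      · exact noncentral 1
      · exact noncentral 2
      · exact noncentral 3
    · intro i
      fin_cases i
      · exact ⟨e_ne (by decide), by show e 0 * e 1 = e 1 * e 0; rw [e01, e10]⟩
      · exact ⟨e_ne (by decide), by show e 1 * e 2 = e 2 * e 1; rw [e12, e21]⟩
      · exact ⟨e_ne (by decide), by show e 2 * e 3 = e 3 * e 2; rw [e23, e32]⟩
    · exact e_ne (by decide)
    · intro i
      fin_cases i
      · show e 0 * e 0 = e 3 * e 0
        rw [e30]
      · show e 0 * e 1 = e 3 * e 1
        rw [e01, e31]
      · show e 0 * e 2 = e 3 * e 2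
        rw [e02, e32]
      · show e 0 * e 3 = e 3 * e 3
        rw [e33]
end
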